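/- Uniform convergence of sample extremal depth (Proposition 2): Assume: (i) P*{x : d_x = 0} = 0 and (P⊗P)*{(x,y) : d_x = d_y and x ≠ y} = 0; (ii) with C_n the number of points t ∈ I at which X_i(t) = X_j(t) for some 1 ≤ i < j ≤ n (assumed finite almost surely), for every ε > 0 one has ℙ[C_n ≥ exp(εn)] → 0 as n → ∞; (iii) for every u₀ ∈ ℝ there exists ε > 0 such that sup{|F_t(u) − F_s(u)| : t,s ∈ I, |t−s| ≤ δ, |u−u₀| < ε} → 0 as δ → 0⁺, where F_t(y) := P{x : x(t) ≤ y}; (iv) sup{|P_n(A) − P(A)| : A ⊆ C(I,ℝ) convex and Borel} → 0 ℙ-almost surely. Then sup_{f ∈ C(I,ℝ)} |ED(f,P_n) − ED(f,P)| → 0 in outer probability: for every ε > 0, ℙ*[sup_{f ∈ C(I,ℝ)} |ED(f,P_n) − ED(f,P)| > ε] → 0 as n → ∞. -/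

import Mathlib

open MeasureTheory Set Filter
open scoped NNReal ENNReal symmDiff

noncomputable section

/-- The space `C(I, ℝ)` of continuous real-valued functions on `I = [0,1]`,
equipped with the sup metric. -/
abbrev FSp := C(unitInterval, ℝ)

/-- Borel σ-algebra on `C(I, ℝ)`. -/
instance : MeasurableSpace FSp := borel FSp
instance : BorelSpace FSp := ⟨rfl⟩

/-- Pointwise depth `D_g(t) = 1 - |P{x : x(t) > g(t)} - P{x : x(t) < g(t)}|`. -/
def pdepth (P : Measure FSp) (g : unitInterval → ℝ) (t : unitInterval) : ℝ :=
  1 - |(P {x : FSp | g t < x t}).toReal - (P {x : FSp | x t < g t}).toReal|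

/-- Depth CDF (d-CDF) `Φ_g(r) = Leb{t ∈ I : D_g(t) ≤ r}`. -/
def dcdf (P : Measure FSp) (g : unitInterval → ℝ) (r : ℝ) : ℝ :=
  (volume {t : unitInterval | pdepth P g t ≤ r}).toReal

/-- The set `R(g,h) = {r ∈ [0,1] : Φ_g(r) ≠ Φ_h(r)}`. -/
def Rset (P : Measure FSp) (g h : unitInterval → ℝ) : Set ℝ :=
  {r ∈ Icc (0:ℝ) 1 | dcdf P g r ≠ dcdf P h r}

/-- `g ≺ h`: `g` is more extreme than `h`, i.e. `R(g,h)` is nonempty and, with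
`r* = inf R(g,h)`, there is `δ > 0` with `Φ_g(r) > Φ_h(r)` for all
`r ∈ (r*, r*+δ) ∩ [0,1]`.  `g ⪰ h` is `¬ prec P g h`. -/
def prec (P : Measure FSp) (g h : unitInterval → ℝ) : Prop :=
  (Rset P g h).Nonempty ∧
  ∃ δ > 0, ∀ r ∈ Ioo (sInf (Rset P g h)) (sInf (Rset P g h) + δ) ∩ Icc (0:ℝ) 1,
    dcdf P h r < dcdf P g r

/-- Extremal depth `ED(g,P) = P*{x ∈ C(I,ℝ) : g ⪰ x}` (a measure applied to an
arbitrary set is the induced outer measure). -/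
def ed (P : Measure FSp) (g : unitInterval → ℝ) : ℝ :=
  (P {x : FSp | ¬ prec P g ⇑x}).toReal

/-- Minimal depth level `d_f = inf{r ∈ [0,1] : Φ_f(r) > 0}`. -/
def dmin (P : Measure FSp) (f : unitInterval → ℝ) : ℝ :=
  sInf {r ∈ Icc (0:ℝ) 1 | 0 < dcdf P f r}

/-- Marginal CDF `F_t(y) = P{x : x(t) ≤ y}`. -/
def margF (P : Measure FSp) (t : unitInterval) (y : ℝ) : ℝ :=
  (P {x : FSp | x t ≤ y}).toReal

/-- Pointwise quantile function `q_a(t) = inf{y : F_t(y) ≥ a}`. -/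
def quant (P : Measure FSp) (a : ℝ) (t : unitInterval) : ℝ :=
  sInf {y : ℝ | a ≤ margF P t y}

/-- Lower envelope `f_L(t) = inf{f(t) : f ∈ C(I,ℝ), ED(f,P) > α}`. -/
def envL (P : Measure FSp) (α : ℝ) (t : unitInterval) : ℝ :=
  sInf ((fun f : FSp => f t) '' {f : FSp | α < ed P ⇑f})

/-- Upper envelope `f_U(t) = sup{f(t) : f ∈ C(I,ℝ), ED(f,P) > α}`. -/
def envU (P : Measure FSp) (α : ℝ) (t : unitInterval) : ℝ :=
  sSup ((fun f : FSp => f t) '' {f : FSp | α < ed P ⇑f})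

/-- The `(1-α)` extremal-depth central region `C_{1-α}`. -/
def centralRegion (P : Measure FSp) (α : ℝ) : Set FSp :=
  {x : FSp | ∀ t, envL P α t ≤ x t ∧ x t ≤ envU P α t}

/-- Boundary `∂C_{1-α}` of the central region. -/
def centralBoundary (P : Measure FSp) (α : ℝ) : Set FSp :=
  {x ∈ centralRegion P α | ∃ t, x t = envL P α t ∨ x t = envU P α t}

-- chunk1 body appended to pre
lemma vol_univ_I : (volume (Set.univ : Set unitInterval)) = 1 := by simp

lemma vol_ne_top (s : Set unitInterval) : volume s ≠ ⊤ := by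
  refine ne_of_lt (lt_of_le_of_lt (measure_mono (subset_univ s)) ?_)
  rw [vol_univ_I]; exact ENNReal.one_lt_top

lemma pdepth_le_one (Q : Measure FSp) (g : unitInterval → ℝ) (t : unitInterval) :
    pdepth Q g t ≤ 1 := by
  have := abs_nonneg ((Q {x : FSp | g t < x t}).toReal - (Q {x : FSp | x t < g t}).toReal)
  unfold pdepth; linarith

lemma dcdf_nonneg (Q : Measure FSp) (g : unitInterval → ℝ) (r : ℝ) : 0 ≤ dcdf Q g r :=
  ENNReal.toReal_nonneg

lemma dcdf_mono (Q : Measure FSp) (g : unitInterval → ℝ) : Monotone (dcdf Q g) := by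
  intro a b hab
  exact ENNReal.toReal_mono (vol_ne_top _) (measure_mono (fun t ht => le_trans ht hab))

lemma dcdf_one (Q : Measure FSp) (g : unitInterval → ℝ) : dcdf Q g 1 = 1 := by
  have : {t : unitInterval | pdepth Q g t ≤ 1} = Set.univ :=
    eq_univ_of_forall (fun t => pdepth_le_one Q g t)
  unfold dcdf; rw [this, vol_univ_I]; simp

def dset (Q : Measure FSp) (g : unitInterval → ℝ) : Set ℝ :=
  {r ∈ Icc (0:ℝ) 1 | 0 < dcdf Q g r}

lemma dmin_eq_inf (Q : Measure FSp) (g : unitInterval → ℝ) : dmin Q g = sInf (dset Q g) := rfl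

lemma one_mem_dset (Q : Measure FSp) (g : unitInterval → ℝ) : (1:ℝ) ∈ dset Q g := by
  refine ⟨⟨zero_le_one, le_refl 1⟩, ?_⟩
  rw [dcdf_one]; norm_num

lemma dset_nonempty (Q : Measure FSp) (g : unitInterval → ℝ) : (dset Q g).Nonempty :=
  ⟨1, one_mem_dset Q g⟩

lemma dset_bddBelow (Q : Measure FSp) (g : unitInterval → ℝ) : BddBelow (dset Q g) :=
  ⟨0, fun r hr => hr.1.1⟩

lemma dmin_nonneg (Q : Measure FSp) (g : unitInterval → ℝ) : 0 ≤ dmin Q g :=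
  le_csInf (dset_nonempty Q g) (fun r hr => hr.1.1)

lemma dmin_le_one (Q : Measure FSp) (g : unitInterval → ℝ) : dmin Q g ≤ 1 :=
  csInf_le (dset_bddBelow Q g) (one_mem_dset Q g)

lemma dcdf_eq_zero_of_lt_dmin (Q : Measure FSp) (g : unitInterval → ℝ) {r : ℝ}
    (hr : r ∈ Icc (0:ℝ) 1) (h : r < dmin Q g) : dcdf Q g r = 0 := by
  by_contra hne
  have hpos : 0 < dcdf Q g r := lt_of_le_of_ne (dcdf_nonneg Q g r) (Ne.symm hne)
  exact absurd (csInf_le (dset_bddBelow Q g) ⟨hr, hpos⟩) (not_le.mpr h)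

lemma dcdf_pos_of_dmin_lt (Q : Measure FSp) (g : unitInterval → ℝ) {r : ℝ}
    (h : dmin Q g < r) : 0 < dcdf Q g r := by
  obtain ⟨b, hb, hbr⟩ := (csInf_lt_iff (dset_bddBelow Q g) (dset_nonempty Q g)).mp h
  exact lt_of_lt_of_le hb.2 (dcdf_mono Q g (le_of_lt hbr))

lemma prec_of_dmin_lt (Q : Measure FSp) (g h : unitInterval → ℝ)
    (hlt : dmin Q g < dmin Q h) : prec Q g h := by
  set a := dmin Q g with ha
  set b := dmin Q h with hb
  have ha0 : 0 ≤ a := dmin_nonneg Q g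
  have hb1 : b ≤ 1 := dmin_le_one Q h
  -- facts about Rset
  have hsub : Ioo a b ⊆ Rset Q g h := by
    intro r hr
    have hr1 : r ≤ 1 := le_of_lt (lt_of_lt_of_le hr.2 hb1)
    have hr0 : 0 ≤ r := le_of_lt (lt_of_le_of_lt ha0 hr.1)
    have hg : 0 < dcdf Q g r := dcdf_pos_of_dmin_lt Q g hr.1
    have hh : dcdf Q h r = 0 := dcdf_eq_zero_of_lt_dmin Q h ⟨hr0, hr1⟩ hr.2
    exact ⟨⟨hr0, hr1⟩, by rw [hh]; exact ne_of_gt hg⟩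
  have hlb : ∀ r ∈ Rset Q g h, a ≤ r := by
    intro r hr
    by_contra hra
    push_neg at hra
    have hg : dcdf Q g r = 0 := dcdf_eq_zero_of_lt_dmin Q g hr.1 hra
    have hh : dcdf Q h r = 0 := dcdf_eq_zero_of_lt_dmin Q h hr.1 (lt_trans hra hlt)
    exact hr.2 (by rw [hg, hh])
  have hne : (Rset Q g h).Nonempty := ⟨(a+b)/2, hsub ⟨by linarith, by linarith⟩⟩
  have hbdd : BddBelow (Rset Q g h) := ⟨0, fun r hr => hr.1.1⟩
  have hinf : sInf (Rset Q g h) = a := by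
    apply le_antisymm
    · by_contra hc
      push_neg at hc
      have ham : a < min (sInf (Rset Q g h)) b := lt_min hc hlt
      have hm1 : min (sInf (Rset Q g h)) b ≤ sInf (Rset Q g h) := min_le_left _ _
      have hm2 : min (sInf (Rset Q g h)) b ≤ b := min_le_right _ _
      have hmem : (a + min (sInf (Rset Q g h)) b)/2 ∈ Rset Q g h :=
        hsub ⟨by linarith, by linarith⟩
      have := csInf_le hbdd hmem
      linarith
    · exact le_csInf hne hlb
  refine ⟨hne, b - a, by linarith, ?_⟩
  intro r hr
  rw [hinf] at hr
  obtain ⟨⟨hra, hrb⟩, hr0, hr1⟩ := hr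
  have hrb' : r < b := by linarith
  rw [dcdf_eq_zero_of_lt_dmin Q h ⟨hr0, hr1⟩ hrb']
  exact dcdf_pos_of_dmin_lt Q g hra

lemma Rset_symm (Q : Measure FSp) (g h : unitInterval → ℝ) : Rset Q g h = Rset Q h g := by
  ext r; exact ⟨fun hr => ⟨hr.1, hr.2.symm⟩, fun hr => ⟨hr.1, hr.2.symm⟩⟩

lemma not_prec_of_prec (Q : Measure FSp) (g h : unitInterval → ℝ)
    (hp : prec Q g h) : ¬ prec Q h g := by
  rintro ⟨hne, δ₂, hδ₂, h₂⟩
  obtain ⟨hne₁, δ₁, hδ₁, h₁⟩ := hp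
  rw [Rset_symm Q h g] at hne h₂
  set s := sInf (Rset Q g h) with hs
  -- s < 1
  obtain ⟨r₀, hr₀⟩ := hne₁
  have hr₀1 : r₀ < 1 := by
    rcases lt_or_eq_of_le hr₀.1.2 with h' | h'
    · exact h'
    · exfalso; apply hr₀.2; rw [h', dcdf_one, dcdf_one]
  have hs0 : 0 ≤ s := le_csInf hne (fun r hr => hr.1.1)
  have hs1 : s < 1 := lt_of_le_of_lt (csInf_le ⟨0, fun r hr => hr.1.1⟩ hr₀) hr₀1
  set r := (s + min (min (s+δ₁) (s+δ₂)) 1)/2 with hr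
  have hrs : s < r := by
    have h1 : s < min (min (s+δ₁) (s+δ₂)) 1 := lt_min (lt_min (by linarith) (by linarith)) hs1
    linarith
  have hrlt : r < min (min (s+δ₁) (s+δ₂)) 1 := by
    have h1 : s < min (min (s+δ₁) (s+δ₂)) 1 := lt_min (lt_min (by linarith) (by linarith)) hs1
    linarith
  have hr1 : r ≤ 1 := le_of_lt (lt_of_lt_of_le hrlt (min_le_right _ _))
  have hrδ₁ : r < s + δ₁ := lt_of_lt_of_le hrlt (le_trans (min_le_left _ _) (min_le_left _ _))
  have hrδ₂ : r < s + δ₂ := lt_of_lt_of_le hrlt (le_trans (min_le_left _ _) (min_le_right _ _))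
  have hr0 : 0 ≤ r := le_of_lt (lt_of_le_of_lt hs0 hrs)
  have c1 := h₁ r ⟨⟨hrs, hrδ₁⟩, hr0, hr1⟩
  have c2 := h₂ r ⟨⟨hrs, hrδ₂⟩, hr0, hr1⟩
  linarith

lemma notprec_subset_le (Q : Measure FSp) (f : FSp) :
    {x : FSp | ¬ prec Q ⇑f ⇑x} ⊆ {x : FSp | dmin Q ⇑x ≤ dmin Q ⇑f} := by
  intro x hx
  simp only [mem_setOf_eq] at *
  by_contra hc
  push_neg at hc
  exact hx (prec_of_dmin_lt Q ⇑f ⇑x hc)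

lemma lt_subset_notprec (Q : Measure FSp) (f : FSp) :
    {x : FSp | dmin Q ⇑x < dmin Q ⇑f} ⊆ {x : FSp | ¬ prec Q ⇑f ⇑x} := by
  intro x hx
  simp only [mem_setOf_eq] at *
  exact not_prec_of_prec Q ⇑x ⇑f (prec_of_dmin_lt Q ⇑x ⇑f hx)
-- chunk2: measurability
set_option synthInstance.maxHeartbeats 1000000
set_option maxHeartbeats 1000000
lemma meas_eval_pair : Measurable (fun p : FSp × unitInterval => p.1 p.2) := by
  have h := measurable_uncurry_of_continuous_of_measurable
    (u := fun (t : unitInterval) (g : FSp) => g t)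
    (fun g => g.continuous)
    (fun t => (continuous_eval_const t).measurable)
  exact h.comp measurable_swap

lemma meas_hsGT (P : Measure FSp) [IsProbabilityMeasure P] :
    Measurable (fun q : unitInterval × ℝ => P {x : FSp | q.2 < x q.1}) := by
  have hs : MeasurableSet {p : (unitInterval × ℝ) × FSp | p.1.2 < p.2 p.1.1} := by
    apply measurableSet_lt
    · exact measurable_fst.snd
    · exact meas_eval_pair.comp (measurable_snd.prodMk measurable_fst.fst)
  exact measurable_measure_prodMk_left hs

lemma meas_hsLT (P : Measure FSp) [IsProbabilityMeasure P] :
    Measurable (fun q : unitInterval × ℝ => P {x : FSp | x q.1 < q.2}) := by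
  have hs : MeasurableSet {p : (unitInterval × ℝ) × FSp | p.2 p.1.1 < p.1.2} := by
    apply measurableSet_lt
    · exact meas_eval_pair.comp (measurable_snd.prodMk measurable_fst.fst)
    · exact measurable_fst.snd
  exact measurable_measure_prodMk_left hs

lemma meas_pdepth (P : Measure FSp) [IsProbabilityMeasure P] :
    Measurable (fun p : FSp × unitInterval => pdepth P p.1 p.2) := by
  have hφ : Measurable (fun p : FSp × unitInterval => (p.2, p.1 p.2)) :=
    measurable_snd.prodMk meas_eval_pair
  have h1 : Measurable (fun p : FSp × unitInterval => (P {x : FSp | p.1 p.2 < x p.2}).toReal) :=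
    (((meas_hsGT P).comp hφ)).ennreal_toReal
  have h2 : Measurable (fun p : FSp × unitInterval => (P {x : FSp | x p.2 < p.1 p.2}).toReal) :=
    (((meas_hsLT P).comp hφ)).ennreal_toReal
  exact measurable_const.sub (h1.sub h2).abs

lemma meas_dcdf (P : Measure FSp) [IsProbabilityMeasure P] (r : ℝ) :
    Measurable fun g : FSp => dcdf P g r := by
  have hW : MeasurableSet {p : FSp × unitInterval | pdepth P p.1 p.2 ≤ r} :=
    measurableSet_le (meas_pdepth P) measurable_const
  exact (measurable_measure_prodMk_left (ν := (volume : Measure unitInterval)) hW).ennreal_toReal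

lemma dmin_le_iff (P : Measure FSp) (g : unitInterval → ℝ) {c : ℝ} (hc : 0 ≤ c) :
    dmin P g ≤ c ↔ ∀ q : ℚ, c < (q:ℝ) → (q:ℝ) ≤ 1 → 0 < dcdf P g q := by
  constructor
  · intro h q hq1 _; exact dcdf_pos_of_dmin_lt P g (lt_of_le_of_lt h hq1)
  · intro hq
    by_contra hc'
    push_neg at hc'
    rcases le_or_gt 1 c with h1 | h1
    · exact absurd (le_trans (dmin_le_one P g) h1) (not_le.mpr hc')
    · obtain ⟨q, hq1, hq2⟩ := exists_rat_btwn (lt_min hc' h1)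
      have hdq : 0 < dcdf P g q := hq q hq1 (le_of_lt (lt_of_lt_of_le hq2 (min_le_right _ _)))
      have : dmin P g ≤ q := csInf_le (dset_bddBelow P g)
        ⟨⟨le_trans hc (le_of_lt hq1), le_of_lt (lt_of_lt_of_le hq2 (min_le_right _ _))⟩, hdq⟩
      exact absurd this (not_le.mpr (lt_of_lt_of_le hq2 (min_le_left _ _)))

lemma meas_dmin (P : Measure FSp) [IsProbabilityMeasure P] :
    Measurable (fun x : FSp => dmin P ⇑x) := by
  apply measurable_of_Iic
  intro c
  rcases lt_or_ge c 0 with hc | hc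
  · have he : (fun x : FSp => dmin P ⇑x) ⁻¹' (Iic c) = ∅ := by
      ext x
      simp only [mem_preimage, mem_Iic, mem_empty_iff_false, iff_false, not_le]
      exact lt_of_lt_of_le hc (dmin_nonneg P ⇑x)
    rw [he]; exact MeasurableSet.empty
  · have he : (fun x : FSp => dmin P ⇑x) ⁻¹' (Iic c) =
        ⋂ (q : ℚ), ⋂ (_ : c < (q:ℝ) ∧ (q:ℝ) ≤ 1), {x : FSp | 0 < dcdf P ⇑x q} := by
      ext x
      simp only [mem_preimage, mem_Iic, mem_iInter, mem_setOf_eq]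
      rw [dmin_le_iff P ⇑x hc]
      exact ⟨fun h q hq => h q hq.1 hq.2, fun h q h1 h2 => h q ⟨h1, h2⟩⟩
    rw [he]
    exact MeasurableSet.iInter fun q => MeasurableSet.iInter fun _ =>
      measurableSet_lt measurable_const (meas_dcdf P q)
-- chunk3: empirical measures and SLLN
lemma Pn_apply_toReal {Ω' : Type} [MeasurableSpace Ω'] (X : ℕ → Ω' → FSp)
    (n : ℕ) (ω : Ω') {S : Set FSp} (hS : MeasurableSet S) :
    ((((n : ℝ≥0∞)⁻¹ • ∑ k ∈ Finset.range n, Measure.dirac (X k ω)) : Measure FSp) S).toReal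
      = (n:ℝ)⁻¹ * ∑ k ∈ Finset.range n, S.indicator (fun _ => (1:ℝ)) (X k ω) := by
  rcases Nat.eq_zero_or_pos n with hn | hn
  · subst hn; simp
  · have hne : (n : ℝ≥0∞) ≠ 0 := by exact_mod_cast Nat.pos_iff_ne_zero.mp hn
    rw [Measure.smul_apply, Measure.finset_sum_apply]
    rw [smul_eq_mul, ENNReal.toReal_mul, ENNReal.toReal_inv, ENNReal.toReal_natCast]
    congr 1
    rw [ENNReal.toReal_sum (fun k _ => by
      rw [Measure.dirac_apply' _ hS]
      by_cases hx : X k ω ∈ S <;> simp [Set.indicator_apply, hx])]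
    refine Finset.sum_congr rfl (fun k _ => ?_)
    rw [Measure.dirac_apply' _ hS]
    by_cases hx : X k ω ∈ S <;> simp [Set.indicator_apply, hx]

lemma Pn_isProb {Ω' : Type} [MeasurableSpace Ω'] (X : ℕ → Ω' → FSp) {n : ℕ} (hn : 0 < n)
    (ω : Ω') :
    IsProbabilityMeasure
      ((((n : ℝ≥0∞)⁻¹ • ∑ k ∈ Finset.range n, Measure.dirac (X k ω)) : Measure FSp)) := by
  constructor
  rw [Measure.smul_apply, Measure.finset_sum_apply]
  have : ∀ k ∈ Finset.range n, (Measure.dirac (X k ω)) (Set.univ : Set FSp) = 1 :=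
    fun k _ => by simp
  rw [Finset.sum_congr rfl this, Finset.sum_const, Finset.card_range, nsmul_eq_mul, mul_one]
  rw [smul_eq_mul]
  exact ENNReal.inv_mul_cancel (by exact_mod_cast Nat.pos_iff_ne_zero.mp hn)
    (ENNReal.natCast_ne_top n)

lemma empirical_ae (P : Measure FSp) [IsProbabilityMeasure P]
    {Ω' : Type} [MeasurableSpace Ω'] (ℙ' : Measure Ω') [IsProbabilityMeasure ℙ']
    (X : ℕ → Ω' → FSp) (hXmeas : ∀ k, Measurable (X k))
    (hXlaw : ∀ k, ℙ'.map (X k) = P)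
    (hXindep : ProbabilityTheory.iIndepFun X ℙ')
    {S : Set FSp} (hS : MeasurableSet S) :
    ∀ᵐ ω ∂ℙ', Tendsto
      (fun n : ℕ => (n:ℝ)⁻¹ * ∑ k ∈ Finset.range n, S.indicator (fun _ => (1:ℝ)) (X k ω))
      atTop (nhds (P S).toReal) := by
  set φ : FSp → ℝ := S.indicator (fun _ => (1:ℝ)) with hφ
  have hφm : Measurable φ := measurable_const.indicator hS
  set Y : ℕ → Ω' → ℝ := fun k ω => φ (X k ω) with hY
  have hYind : ∀ k, Y k = (X k ⁻¹' S).indicator (fun _ => (1:ℝ)) := by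
    intro k; funext ω
    exact (Set.indicator_comp_right (X k) (g := fun _ => (1:ℝ)) (x := ω)).symm
  have hint : Integrable (Y 0) ℙ' := by
    rw [hYind 0]; exact (integrable_const (1:ℝ)).indicator (hXmeas 0 hS)
  have hindep : Pairwise (Function.onFun (fun f g => ProbabilityTheory.IndepFun f g ℙ') Y) :=
    fun i j hij => (hXindep.indepFun hij).comp hφm hφm
  have hident : ∀ i, ProbabilityTheory.IdentDistrib (Y i) (Y 0) ℙ' ℙ' := by
    intro i
    refine ⟨(hφm.comp (hXmeas i)).aemeasurable, (hφm.comp (hXmeas 0)).aemeasurable, ?_⟩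
    show Measure.map (Y i) ℙ' = Measure.map (Y 0) ℙ'
    have hi : Y i = φ ∘ X i := rfl
    have h0 : Y 0 = φ ∘ X 0 := rfl
    rw [hi, h0, ← Measure.map_map hφm (hXmeas i), ← Measure.map_map hφm (hXmeas 0),
      hXlaw i, hXlaw 0]
  have hE : ∫ ω, Y 0 ω ∂ℙ' = (P S).toReal := by
    rw [hYind 0, integral_indicator_const (1:ℝ) (hXmeas 0 hS), smul_eq_mul, mul_one, measureReal_def,
      ← Measure.map_apply (hXmeas 0) hS, hXlaw 0]
  have hsl := ProbabilityTheory.strong_law_ae Y hint hindep hident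
  rw [hE] at hsl
  filter_upwards [hsl] with ω hω
  have : (fun n : ℕ => (n:ℝ)⁻¹ * ∑ k ∈ Finset.range n, φ (X k ω))
      = fun n : ℕ => (n:ℝ)⁻¹ • ∑ i ∈ Finset.range n, Y i ω := by
    funext n; rw [smul_eq_mul]
  rw [show (fun n : ℕ => (n:ℝ)⁻¹ * ∑ k ∈ Finset.range n, S.indicator (fun _ => (1:ℝ)) (X k ω))
      = fun n : ℕ => (n:ℝ)⁻¹ • ∑ i ∈ Finset.range n, Y i ω from this]
  exact hω

lemma meas_Pn_apply {Ω' : Type} [MeasurableSpace Ω'] (X : ℕ → Ω' → FSp)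
    (hXmeas : ∀ k, Measurable (X k)) (n : ℕ) {S : Set FSp} (hS : MeasurableSet S) :
    Measurable (fun ω : Ω' =>
      ((((n : ℝ≥0∞)⁻¹ • ∑ k ∈ Finset.range n, Measure.dirac (X k ω)) : Measure FSp) S).toReal) := by
  have : (fun ω : Ω' =>
      ((((n : ℝ≥0∞)⁻¹ • ∑ k ∈ Finset.range n, Measure.dirac (X k ω)) : Measure FSp) S).toReal)
      = fun ω => (n:ℝ)⁻¹ * ∑ k ∈ Finset.range n, S.indicator (fun _ => (1:ℝ)) (X k ω) := by
    funext ω; exact Pn_apply_toReal X n ω hS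
  rw [this]
  exact measurable_const.mul (Finset.measurable_sum _ (fun k _ =>
    (measurable_const.indicator hS).comp (hXmeas k)))
-- chunk4: halfspace transfer
lemma meval (t : unitInterval) : Measurable (fun x : FSp => x t) :=
  (continuous_eval_const t).measurable

lemma measSet_gt (t : unitInterval) (u : ℝ) : MeasurableSet {x : FSp | u < x t} :=
  measurableSet_lt measurable_const (meval t)

lemma measSet_lt (t : unitInterval) (u : ℝ) : MeasurableSet {x : FSp | x t < u} :=
  measurableSet_lt (meval t) measurable_const

lemma measSet_le (t : unitInterval) (u : ℝ) : MeasurableSet {x : FSp | x t ≤ u} :=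
  measurableSet_le (meval t) measurable_const

lemma Q_eq_of_iff (n : ℕ) (p : ℕ → FSp) {A B : Set FSp}
    (hA : MeasurableSet A) (hB : MeasurableSet B)
    (h : ∀ k < n, (p k ∈ A ↔ p k ∈ B)) :
    (((n : ℝ≥0∞)⁻¹ • ∑ k ∈ Finset.range n, Measure.dirac (p k)) : Measure FSp) A
      = (((n : ℝ≥0∞)⁻¹ • ∑ k ∈ Finset.range n, Measure.dirac (p k)) : Measure FSp) B := by
  rw [Measure.smul_apply, Measure.smul_apply, Measure.finset_sum_apply, Measure.finset_sum_apply]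
  congr 1
  refine Finset.sum_congr rfl (fun k hk => ?_)
  rw [Measure.dirac_apply' _ hA, Measure.dirac_apply' _ hB]
  by_cases h1 : p k ∈ A
  · rw [Set.indicator_of_mem h1, Set.indicator_of_mem ((h k (Finset.mem_range.mp hk)).mp h1)]
  · rw [Set.indicator_of_notMem h1,
      Set.indicator_of_notMem (fun hb => h1 ((h k (Finset.mem_range.mp hk)).mpr hb))]

lemma exists_small_Ioc (P : Measure FSp) [IsProbabilityMeasure P]
    (t : unitInterval) (u : ℝ) {τ : ℝ} (hτ : 0 < τ) :
    ∃ γ > (0:ℝ), (P {x : FSp | u < x t ∧ x t ≤ u + 2*γ}).toReal ≤ τ := by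
  set S : ℕ → Set FSp := fun m => {x : FSp | u < x t ∧ x t ≤ u + 2*(1/((m:ℝ)+1))} with hS
  have hmeas : ∀ m, MeasurableSet (S m) := fun m => (measSet_gt t u).inter (measSet_le t _)
  have hanti : Antitone S := by
    intro m m' hmm x hx
    refine ⟨hx.1, le_trans hx.2 ?_⟩
    have h1 : (0:ℝ) < (m:ℝ)+1 := by positivity
    have h2 : (m:ℝ)+1 ≤ (m':ℝ)+1 := by exact_mod_cast by omega
    have := one_div_le_one_div_of_le h1 h2
    linarith
  have hiInter : ⋂ m, S m = ∅ := by
    ext x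
    simp only [mem_iInter, mem_empty_iff_false, iff_false, not_forall, hS, mem_setOf_eq]
    by_cases hx : u < x t
    · obtain ⟨m, hm⟩ := exists_nat_gt (2/(x t - u))
      refine ⟨m, ?_⟩
      rw [not_and_or, not_le]
      right
      have hd : 0 < x t - u := by linarith
      have h1 : (0:ℝ) < (m:ℝ)+1 := by positivity
      have h2 : 2/(x t - u) < (m:ℝ)+1 := lt_of_lt_of_le hm (by linarith)
      have := (div_lt_iff₀ hd).mp h2
      have : 2*(1/((m:ℝ)+1)) < x t - u := by
        rw [mul_one_div]
        rw [div_lt_iff₀ h1]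
        linarith
      linarith
    · exact ⟨0, fun hc => hx hc.1⟩
  have htend := MeasureTheory.tendsto_measure_iInter_atTop
    (fun m => (hmeas m).nullMeasurableSet) hanti ⟨0, measure_ne_top P _⟩
  rw [hiInter, measure_empty] at htend
  have hpos : (0:ℝ≥0∞) < ENNReal.ofReal τ := ENNReal.ofReal_pos.mpr hτ
  obtain ⟨m, hm⟩ := (htend.eventually (gt_mem_nhds hpos)).exists
  refine ⟨1/((m:ℝ)+1), by positivity, ?_⟩
  exact ENNReal.toReal_le_of_le_ofReal hτ.le (le_of_lt hm)

lemma exists_small_Ico (P : Measure FSp) [IsProbabilityMeasure P]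
    (t : unitInterval) (u : ℝ) {τ : ℝ} (hτ : 0 < τ) :
    ∃ γ > (0:ℝ), (P {x : FSp | u - 2*γ ≤ x t ∧ x t < u}).toReal ≤ τ := by
  set S : ℕ → Set FSp := fun m => {x : FSp | u - 2*(1/((m:ℝ)+1)) ≤ x t ∧ x t < u} with hS
  have hmeas : ∀ m, MeasurableSet (S m) :=
    fun m => (measurableSet_le measurable_const (meval t)).inter (measSet_lt t u)
  have hanti : Antitone S := by
    intro m m' hmm x hx
    refine ⟨le_trans ?_ hx.1, hx.2⟩
    have h1 : (0:ℝ) < (m:ℝ)+1 := by positivity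
    have h2 : (m:ℝ)+1 ≤ (m':ℝ)+1 := by exact_mod_cast by omega
    have := one_div_le_one_div_of_le h1 h2
    linarith
  have hiInter : ⋂ m, S m = ∅ := by
    ext x
    simp only [mem_iInter, mem_empty_iff_false, iff_false, not_forall, hS, mem_setOf_eq]
    by_cases hx : x t < u
    · obtain ⟨m, hm⟩ := exists_nat_gt (2/(u - x t))
      refine ⟨m, ?_⟩
      rw [not_and_or, not_le]
      left
      have hd : 0 < u - x t := by linarith
      have h1 : (0:ℝ) < (m:ℝ)+1 := by positivity
      have h2 : 2/(u - x t) < (m:ℝ)+1 := lt_of_lt_of_le hm (by linarith)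
      have : 2*(1/((m:ℝ)+1)) < u - x t := by
        rw [mul_one_div, div_lt_iff₀ h1]
        have := (div_lt_iff₀ hd).mp h2
        linarith
      linarith
    · exact ⟨0, fun hc => hx hc.2⟩
  have htend := MeasureTheory.tendsto_measure_iInter_atTop
    (fun m => (hmeas m).nullMeasurableSet) hanti ⟨0, measure_ne_top P _⟩
  rw [hiInter, measure_empty] at htend
  have hpos : (0:ℝ≥0∞) < ENNReal.ofReal τ := ENNReal.ofReal_pos.mpr hτ
  obtain ⟨m, hm⟩ := (htend.eventually (gt_mem_nhds hpos)).exists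
  refine ⟨1/((m:ℝ)+1), by positivity, ?_⟩
  exact ENNReal.toReal_le_of_le_ofReal hτ.le (le_of_lt hm)

/-- gap below the paths above level `u` at time `t` -/
lemma exists_path_gap_gt (n : ℕ) (p : ℕ → FSp) (t : unitInterval) (u : ℝ) :
    ∃ γ > (0:ℝ), ∀ k < n, u < p k t → u + 3*γ ≤ p k t := by
  classical
  set F := (Finset.range n).filter (fun k => u < p k t) with hF
  rcases F.eq_empty_or_nonempty with he | hne
  · refine ⟨1, one_pos, fun k hk hu => ?_⟩
    exfalso
    have : k ∈ F := Finset.mem_filter.mpr ⟨Finset.mem_range.mpr hk, hu⟩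
    rw [he] at this; exact absurd this (Finset.notMem_empty k)
  · set V := F.image (fun k => p k t - u) with hV
    have hVne : V.Nonempty := hne.image _
    set γ := V.min' hVne / 3 with hγ
    have hmem := V.min'_mem hVne
    obtain ⟨k₀, hk₀, hk₀e⟩ := Finset.mem_image.mp hmem
    have hpos : 0 < V.min' hVne := by
      rw [← hk₀e]
      have := (Finset.mem_filter.mp hk₀).2
      linarith
    refine ⟨γ, by positivity, fun k hk hu => ?_⟩
    have hkF : k ∈ F := Finset.mem_filter.mpr ⟨Finset.mem_range.mpr hk, hu⟩
    have : V.min' hVne ≤ p k t - u :=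
      Finset.min'_le V _ (Finset.mem_image.mpr ⟨k, hkF, rfl⟩)
    rw [hγ] at *
    linarith

lemma exists_path_gap_lt (n : ℕ) (p : ℕ → FSp) (t : unitInterval) (u : ℝ) :
    ∃ γ > (0:ℝ), ∀ k < n, p k t < u → p k t ≤ u - 3*γ := by
  classical
  set F := (Finset.range n).filter (fun k => p k t < u) with hF
  rcases F.eq_empty_or_nonempty with he | hne
  · refine ⟨1, one_pos, fun k hk hu => ?_⟩
    exfalso
    have : k ∈ F := Finset.mem_filter.mpr ⟨Finset.mem_range.mpr hk, hu⟩
    rw [he] at this; exact absurd this (Finset.notMem_empty k)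
  · set V := F.image (fun k => u - p k t) with hV
    have hVne : V.Nonempty := hne.image _
    set γ := V.min' hVne / 3 with hγ
    have hmem := V.min'_mem hVne
    obtain ⟨k₀, hk₀, hk₀e⟩ := Finset.mem_image.mp hmem
    have hpos : 0 < V.min' hVne := by
      rw [← hk₀e]
      have := (Finset.mem_filter.mp hk₀).2
      linarith
    refine ⟨γ, by positivity, fun k hk hu => ?_⟩
    have hkF : k ∈ F := Finset.mem_filter.mpr ⟨Finset.mem_range.mpr hk, hu⟩
    have : V.min' hVne ≤ u - p k t :=
      Finset.min'_le V _ (Finset.mem_image.mpr ⟨k, hkF, rfl⟩)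
    rw [hγ] at *
    linarith

/-- find a dense-sequence point close to `t` where all the finitely many paths move little -/
lemma exists_dense_close (n : ℕ) (p : ℕ → FSp) (t : unitInterval) {δ γ : ℝ}
    (hδ : 0 < δ) (hγ : 0 < γ) :
    ∃ i : ℕ, dist (TopologicalSpace.denseSeq unitInterval i) t ≤ δ ∧
      ∀ k < n, |p k (TopologicalSpace.denseSeq unitInterval i) - p k t| < γ := by
  classical
  set U : Set unitInterval :=
    Metric.ball t δ ∩ ⋂ k ∈ Finset.range n, {s : unitInterval | |p k s - p k t| < γ} with hU
  have hUopen : IsOpen U := by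
    apply IsOpen.inter Metric.isOpen_ball
    apply isOpen_biInter_finset
    intro k _
    have hc : Continuous (fun s : unitInterval => |p k s - p k t|) :=
      continuous_abs.comp ((p k).continuous.sub continuous_const)
    exact isOpen_lt hc continuous_const
  have hUne : U.Nonempty := by
    refine ⟨t, Metric.mem_ball_self hδ, ?_⟩
    simp only [mem_iInter, mem_setOf_eq]
    intro k _
    simpa using hγ
  obtain ⟨i, hi⟩ := (TopologicalSpace.denseRange_denseSeq unitInterval).exists_mem_open hUopen hUne
  refine ⟨i, le_of_lt (Metric.mem_ball.mp hi.1), ?_⟩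
  intro k hk
  have := hi.2
  simp only [mem_iInter, mem_setOf_eq] at this
  exact this k (Finset.mem_range.mpr hk)
-- chunk4b: the transfer lemma
lemma halfspace_transfer
    (P : Measure FSp) [IsProbabilityMeasure P]
    (n : ℕ) (p : ℕ → FSp) (η : ℝ)
    (tcGT : ∀ (u : ℝ) (τ : ℝ), 0 < τ → ∃ δ > (0:ℝ), ∀ t s : unitInterval, dist t s ≤ δ →
        |(P {x : FSp | u < x t}).toReal - (P {x : FSp | u < x s}).toReal| ≤ τ)
    (tcLT : ∀ (u : ℝ) (τ : ℝ), 0 < τ → ∃ δ > (0:ℝ), ∀ t s : unitInterval, dist t s ≤ δ →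
        |(P {x : FSp | x t < u}).toReal - (P {x : FSp | x s < u}).toReal| ≤ τ)
    (hM : ∀ (i : ℕ) (q : ℚ),
        |((((n : ℝ≥0∞)⁻¹ • ∑ k ∈ Finset.range n, Measure.dirac (p k)) : Measure FSp)
            {x : FSp | (q:ℝ) < x (TopologicalSpace.denseSeq unitInterval i)}).toReal
          - (P {x : FSp | (q:ℝ) < x (TopologicalSpace.denseSeq unitInterval i)}).toReal| ≤ η ∧
        |((((n : ℝ≥0∞)⁻¹ • ∑ k ∈ Finset.range n, Measure.dirac (p k)) : Measure FSp)
            {x : FSp | x (TopologicalSpace.denseSeq unitInterval i) < (q:ℝ)}).toReal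
          - (P {x : FSp | x (TopologicalSpace.denseSeq unitInterval i) < (q:ℝ)}).toReal| ≤ η) :
    ∀ (t : unitInterval) (u : ℝ),
      |((((n : ℝ≥0∞)⁻¹ • ∑ k ∈ Finset.range n, Measure.dirac (p k)) : Measure FSp)
          {x : FSp | u < x t}).toReal - (P {x : FSp | u < x t}).toReal| ≤ η ∧
      |((((n : ℝ≥0∞)⁻¹ • ∑ k ∈ Finset.range n, Measure.dirac (p k)) : Measure FSp)
          {x : FSp | x t < u}).toReal - (P {x : FSp | x t < u}).toReal| ≤ η := by
  set Q : Measure FSp := (n : ℝ≥0∞)⁻¹ • ∑ k ∈ Finset.range n, Measure.dirac (p k) with hQdef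
  intro t u
  constructor
  · -- GT case
    apply le_of_forall_pos_le_add
    intro τ hτ
    obtain ⟨γ₁, hγ₁, hgap⟩ := exists_path_gap_gt n p t u
    obtain ⟨γ₂, hγ₂, hmeas2⟩ := exists_small_Ioc P t u (by linarith : (0:ℝ) < τ/2)
    set γ := min γ₁ γ₂ with hγdef
    have hγ0 : 0 < γ := lt_min hγ₁ hγ₂
    obtain ⟨u', hu'l, hu'r⟩ := exists_rat_btwn (by linarith : u + γ < u + 2*γ)
    obtain ⟨δ, hδ0, hδ⟩ := tcGT u' (τ/4) (by linarith)
    obtain ⟨i, hit, hclose⟩ := exists_dense_close n p t hδ0 (by linarith : (0:ℝ) < γ/2)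
    set t' := TopologicalSpace.denseSeq unitInterval i with ht'
    -- empirical equality
    have hQeq : Q {x : FSp | u < x t} = Q {x : FSp | (u':ℝ) < x t'} := by
      apply Q_eq_of_iff n p (measSet_gt t u) (measSet_gt t' u')
      intro k hk
      have hcl := hclose k hk
      have hcl' := abs_lt.mp hcl
      simp only [mem_setOf_eq]
      constructor
      · intro hu
        have h3 := hgap k hk hu
        have : γ ≤ γ₁ := min_le_left _ _
        linarith [hcl'.1, hcl'.2]
      · intro hu'
        linarith [hcl'.1, hcl'.2]
    -- P split at (u, u']
    have hsubset : {x : FSp | (u':ℝ) < x t} ⊆ {x : FSp | u < x t} :=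
      fun x hx => lt_trans (by linarith : u < (u':ℝ)) hx
    have hdisj : Disjoint {x : FSp | (u':ℝ) < x t} {x : FSp | u < x t ∧ x t ≤ (u':ℝ)} := by
      rw [Set.disjoint_left]
      rintro x hx ⟨_, hx2⟩
      simp only [mem_setOf_eq] at hx
      linarith
    have hms : MeasurableSet {x : FSp | u < x t ∧ x t ≤ (u':ℝ)} :=
      (measSet_gt t u).inter (measSet_le t _)
    have hsplit : P {x : FSp | u < x t}
        = P {x : FSp | (u':ℝ) < x t} + P {x : FSp | u < x t ∧ x t ≤ (u':ℝ)} := by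
      rw [← measure_union hdisj hms]
      congr 1
      ext x
      simp only [mem_union, mem_setOf_eq]
      constructor
      · intro hx
        rcases le_or_gt (x t) u' with h | h
        · exact Or.inr ⟨hx, h⟩
        · exact Or.inl h
      · rintro (hx | hx)
        · exact lt_trans (by linarith) hx
        · exact hx.1
    have hmid : (P {x : FSp | u < x t ∧ x t ≤ (u':ℝ)}).toReal ≤ τ/2 := by
      refine le_trans (ENNReal.toReal_mono (measure_ne_top P _) (measure_mono ?_)) hmeas2
      intro x hx
      refine ⟨hx.1, le_trans hx.2 ?_⟩
      have : γ ≤ γ₂ := min_le_right _ _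
      linarith
    have hsplitR : (P {x : FSp | u < x t}).toReal
        = (P {x : FSp | (u':ℝ) < x t}).toReal
          + (P {x : FSp | u < x t ∧ x t ≤ (u':ℝ)}).toReal := by
      rw [hsplit, ENNReal.toReal_add (measure_ne_top P _) (measure_ne_top P _)]
    have htc := hδ t' t hit
    have hMi := (hM i u').1
    have habs : |(Q {x : FSp | u < x t}).toReal - (P {x : FSp | u < x t}).toReal|
        ≤ |(Q {x : FSp | (u':ℝ) < x t'}).toReal - (P {x : FSp | (u':ℝ) < x t'}).toReal|
          + |(P {x : FSp | (u':ℝ) < x t'}).toReal - (P {x : FSp | (u':ℝ) < x t}).toReal|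
          + |(P {x : FSp | (u':ℝ) < x t}).toReal - (P {x : FSp | u < x t}).toReal| := by
      rw [hQeq]
      have h1 := abs_sub_le ((Q {x : FSp | (u':ℝ) < x t'}).toReal)
        ((P {x : FSp | (u':ℝ) < x t'}).toReal) ((P {x : FSp | u < x t}).toReal)
      have h2 := abs_sub_le ((P {x : FSp | (u':ℝ) < x t'}).toReal)
        ((P {x : FSp | (u':ℝ) < x t}).toReal) ((P {x : FSp | u < x t}).toReal)
      linarith
    have hlast : |(P {x : FSp | (u':ℝ) < x t}).toReal - (P {x : FSp | u < x t}).toReal| ≤ τ/2 := by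
      have hnn : (0:ℝ) ≤ (P {x : FSp | u < x t}).toReal - (P {x : FSp | (u':ℝ) < x t}).toReal := by
        rw [hsplitR]
        linarith [ENNReal.toReal_nonneg (a := P {x : FSp | u < x t ∧ x t ≤ (u':ℝ)})]
      rw [abs_sub_comm, abs_of_nonneg hnn, hsplitR]
      linarith [hmid]
    calc |(Q {x : FSp | u < x t}).toReal - (P {x : FSp | u < x t}).toReal|
        ≤ _ := habs
      _ ≤ η + τ/4 + τ/2 := by
          refine add_le_add (add_le_add hMi htc) hlast
      _ ≤ η + τ := by linarith
  · -- LT case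
    apply le_of_forall_pos_le_add
    intro τ hτ
    obtain ⟨γ₁, hγ₁, hgap⟩ := exists_path_gap_lt n p t u
    obtain ⟨γ₂, hγ₂, hmeas2⟩ := exists_small_Ico P t u (by linarith : (0:ℝ) < τ/2)
    set γ := min γ₁ γ₂ with hγdef
    have hγ0 : 0 < γ := lt_min hγ₁ hγ₂
    obtain ⟨u', hu'l, hu'r⟩ := exists_rat_btwn (by linarith : u - 2*γ < u - γ)
    obtain ⟨δ, hδ0, hδ⟩ := tcLT u' (τ/4) (by linarith)
    obtain ⟨i, hit, hclose⟩ := exists_dense_close n p t hδ0 (by linarith : (0:ℝ) < γ/2)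
    set t' := TopologicalSpace.denseSeq unitInterval i with ht'
    have hQeq : Q {x : FSp | x t < u} = Q {x : FSp | x t' < (u':ℝ)} := by
      apply Q_eq_of_iff n p (measSet_lt t u) (measSet_lt t' u')
      intro k hk
      have hcl' := abs_lt.mp (hclose k hk)
      simp only [mem_setOf_eq]
      constructor
      · intro hu
        have h3 := hgap k hk hu
        have : γ ≤ γ₁ := min_le_left _ _
        linarith [hcl'.1, hcl'.2]
      · intro hu'
        linarith [hcl'.1, hcl'.2]
    have hdisj : Disjoint {x : FSp | x t < (u':ℝ)} {x : FSp | (u':ℝ) ≤ x t ∧ x t < u} := by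
      rw [Set.disjoint_left]
      rintro x hx ⟨hx2, _⟩
      simp only [mem_setOf_eq] at hx
      linarith
    have hms : MeasurableSet {x : FSp | (u':ℝ) ≤ x t ∧ x t < u} :=
      (measurableSet_le measurable_const (meval t)).inter (measSet_lt t u)
    have hsplit : P {x : FSp | x t < u}
        = P {x : FSp | x t < (u':ℝ)} + P {x : FSp | (u':ℝ) ≤ x t ∧ x t < u} := by
      rw [← measure_union hdisj hms]
      congr 1
      ext x
      simp only [mem_union, mem_setOf_eq]
      constructor
      · intro hx
        rcases le_or_gt (u':ℝ) (x t) with h | h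
        · exact Or.inr ⟨h, hx⟩
        · exact Or.inl h
      · rintro (hx | hx)
        · exact lt_trans hx (by linarith)
        · exact hx.2
    have hmid : (P {x : FSp | (u':ℝ) ≤ x t ∧ x t < u}).toReal ≤ τ/2 := by
      refine le_trans (ENNReal.toReal_mono (measure_ne_top P _) (measure_mono ?_)) hmeas2
      intro x hx
      refine ⟨le_trans ?_ hx.1, hx.2⟩
      have : γ ≤ γ₂ := min_le_right _ _
      linarith
    have hsplitR : (P {x : FSp | x t < u}).toReal
        = (P {x : FSp | x t < (u':ℝ)}).toReal
          + (P {x : FSp | (u':ℝ) ≤ x t ∧ x t < u}).toReal := by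
      rw [hsplit, ENNReal.toReal_add (measure_ne_top P _) (measure_ne_top P _)]
    have htc := hδ t' t hit
    have hMi := (hM i u').2
    have habs : |(Q {x : FSp | x t < u}).toReal - (P {x : FSp | x t < u}).toReal|
        ≤ |(Q {x : FSp | x t' < (u':ℝ)}).toReal - (P {x : FSp | x t' < (u':ℝ)}).toReal|
          + |(P {x : FSp | x t' < (u':ℝ)}).toReal - (P {x : FSp | x t < (u':ℝ)}).toReal|
          + |(P {x : FSp | x t < (u':ℝ)}).toReal - (P {x : FSp | x t < u}).toReal| := by
      rw [hQeq]
      have h1 := abs_sub_le ((Q {x : FSp | x t' < (u':ℝ)}).toReal)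
        ((P {x : FSp | x t' < (u':ℝ)}).toReal) ((P {x : FSp | x t < u}).toReal)
      have h2 := abs_sub_le ((P {x : FSp | x t' < (u':ℝ)}).toReal)
        ((P {x : FSp | x t < (u':ℝ)}).toReal) ((P {x : FSp | x t < u}).toReal)
      linarith
    have hlast : |(P {x : FSp | x t < (u':ℝ)}).toReal - (P {x : FSp | x t < u}).toReal| ≤ τ/2 := by
      have hnn : (0:ℝ) ≤ (P {x : FSp | x t < u}).toReal - (P {x : FSp | x t < (u':ℝ)}).toReal := by
        rw [hsplitR]
        linarith [ENNReal.toReal_nonneg (a := P {x : FSp | (u':ℝ) ≤ x t ∧ x t < u})]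
      rw [abs_sub_comm, abs_of_nonneg hnn, hsplitR]
      linarith [hmid]
    calc |(Q {x : FSp | x t < u}).toReal - (P {x : FSp | x t < u}).toReal|
        ≤ _ := habs
      _ ≤ η + τ/4 + τ/2 := add_le_add (add_le_add hMi htc) hlast
      _ ≤ η + τ := by linarith
-- chunk5
lemma pdepth_close (P Q : Measure FSp) {η : ℝ}
    (hb : ∀ (t : unitInterval) (u : ℝ),
      |(Q {x : FSp | u < x t}).toReal - (P {x : FSp | u < x t}).toReal| ≤ η ∧
      |(Q {x : FSp | x t < u}).toReal - (P {x : FSp | x t < u}).toReal| ≤ η) :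
    ∀ (g : unitInterval → ℝ) (t : unitInterval), |pdepth Q g t - pdepth P g t| ≤ 2*η := by
  intro g t
  obtain ⟨h1, h2⟩ := hb t (g t)
  set aQ := (Q {x : FSp | g t < x t}).toReal
  set bQ := (Q {x : FSp | x t < g t}).toReal
  set aP := (P {x : FSp | g t < x t}).toReal
  set bP := (P {x : FSp | x t < g t}).toReal
  have hkey : pdepth Q g t - pdepth P g t = |aP - bP| - |aQ - bQ| := by
    unfold pdepth; ring
  rw [hkey]
  have k1 := abs_abs_sub_abs_le_abs_sub (aP - bP) (aQ - bQ)
  have k2 : |aP - bP - (aQ - bQ)| ≤ |aP - aQ| + |bQ - bP| := by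
    have he : aP - bP - (aQ - bQ) = (aP - aQ) + (bQ - bP) := by ring
    rw [he]
    exact abs_add_le _ _
  have k3 : |aP - aQ| ≤ η := by rw [abs_sub_comm]; exact h1
  have k4 : |bQ - bP| ≤ η := h2
  linarith

lemma dcdf_bracket (P Q : Measure FSp) {η : ℝ}
    (hp : ∀ (g : unitInterval → ℝ) (t : unitInterval), |pdepth Q g t - pdepth P g t| ≤ 2*η)
    (g : unitInterval → ℝ) (r : ℝ) : dcdf Q g r ≤ dcdf P g (r + 2*η) := by
  apply ENNReal.toReal_mono (vol_ne_top _)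
  apply measure_mono
  intro t ht
  simp only [mem_setOf_eq] at *
  have := abs_le.mp (hp g t)
  linarith

lemma dmin_bracket_one (P Q : Measure FSp) {η : ℝ} (hη : 0 ≤ η)
    (h : ∀ (g : unitInterval → ℝ) (r : ℝ), dcdf Q g r ≤ dcdf P g (r + 2*η)) :
    ∀ g : unitInterval → ℝ, dmin P g ≤ dmin Q g + 2*η := by
  intro g
  have hlb : ∀ r ∈ dset Q g, dmin P g - 2*η ≤ r := by
    intro r hr
    rcases le_or_gt (r + 2*η) 1 with h1 | h1
    · have hpos : 0 < dcdf P g (r + 2*η) := lt_of_lt_of_le hr.2 (h g r)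
      have h0 : (0:ℝ) ≤ r + 2*η := by linarith [hr.1.1]
      have hci := csInf_le (dset_bddBelow P g) (⟨⟨h0, h1⟩, hpos⟩ : (r + 2*η) ∈ dset P g)
      have hdp : dmin P g = sInf (dset P g) := rfl
      rw [hdp]
      linarith
    · linarith [dmin_le_one P g]
  have hle := le_csInf (dset_nonempty Q g) hlb
  have hd : dmin Q g = sInf (dset Q g) := rfl
  rw [hd]
  linarith [hle]

lemma ed_eq_G (P : Measure FSp) [IsProbabilityMeasure P]
    (hnoatom : ∀ c, P {x : FSp | dmin P ⇑x = c} = 0) (f : FSp) :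
    ed P ⇑f = (P {x : FSp | dmin P ⇑x ≤ dmin P ⇑f}).toReal := by
  set c := dmin P ⇑f with hc
  have hub : ed P ⇑f ≤ (P {x : FSp | dmin P ⇑x ≤ c}).toReal :=
    ENNReal.toReal_mono (measure_ne_top P _) (measure_mono (notprec_subset_le P f))
  have hlb : (P {x : FSp | dmin P ⇑x < c}).toReal ≤ ed P ⇑f :=
    ENNReal.toReal_mono (measure_ne_top P _) (measure_mono (lt_subset_notprec P f))
  have hss : {x : FSp | dmin P ⇑x < c} ⊆ {x : FSp | dmin P ⇑x ≤ c} := by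
    intro x hx
    simp only [mem_setOf_eq] at *
    exact le_of_lt hx
  have heq : P {x : FSp | dmin P ⇑x ≤ c} = P {x : FSp | dmin P ⇑x < c} := by
    apply le_antisymm
    · have hsub : {x : FSp | dmin P ⇑x ≤ c}
          ⊆ {x : FSp | dmin P ⇑x < c} ∪ {x : FSp | dmin P ⇑x = c} := by
        intro x hx
        simp only [mem_setOf_eq] at hx
        rcases lt_or_eq_of_le hx with h | h
        · exact Or.inl h
        · exact Or.inr h
      calc P {x : FSp | dmin P ⇑x ≤ c}
          ≤ P ({x : FSp | dmin P ⇑x < c} ∪ {x : FSp | dmin P ⇑x = c}) := measure_mono hsub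
        _ ≤ P {x : FSp | dmin P ⇑x < c} + P {x : FSp | dmin P ⇑x = c} := measure_union_le _ _
        _ = P {x : FSp | dmin P ⇑x < c} := by rw [hnoatom c, add_zero]
    · exact measure_mono hss
  have heqR : (P {x : FSp | dmin P ⇑x ≤ c}).toReal = (P {x : FSp | dmin P ⇑x < c}).toReal := by
    rw [heq]
  linarith

lemma G_continuous (P : Measure FSp) [IsProbabilityMeasure P]
    (hnoatom : ∀ c, P {x : FSp | dmin P ⇑x = c} = 0) :
    Continuous (fun c : ℝ => (P {x : FSp | dmin P ⇑x ≤ c}).toReal) := by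
  set G := fun c : ℝ => (P {x : FSp | dmin P ⇑x ≤ c}).toReal with hG
  have hmeasset : ∀ c : ℝ, MeasurableSet {x : FSp | dmin P ⇑x ≤ c} :=
    fun c => (meas_dmin P) measurableSet_Iic
  have hmono : Monotone G := fun a b hab => ENNReal.toReal_mono (measure_ne_top P _)
    (measure_mono (fun x hx => le_trans hx hab))
  rw [continuous_iff_continuousAt]
  intro c
  rw [Metric.continuousAt_iff]
  intro θ hθ
  have hrt : Tendsto (fun m : ℕ => G (c + 1/((m:ℝ)+1))) atTop (nhds (G c)) := by
    have hanti : Antitone (fun m : ℕ => {x : FSp | dmin P ⇑x ≤ c + 1/((m:ℝ)+1)}) := by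
      intro m m' hmm x hx
      simp only [mem_setOf_eq] at *
      have h1 : (0:ℝ) < (m:ℝ)+1 := by positivity
      have h2 : (m:ℝ)+1 ≤ (m':ℝ)+1 := by exact_mod_cast by omega
      have := one_div_le_one_div_of_le h1 h2
      linarith
    have hI : ⋂ m : ℕ, {x : FSp | dmin P ⇑x ≤ c + 1/((m:ℝ)+1)} = {x : FSp | dmin P ⇑x ≤ c} := by
      ext x
      simp only [mem_iInter, mem_setOf_eq]
      constructor
      · intro h
        by_contra hc'
        push_neg at hc'
        obtain ⟨m, hm⟩ := exists_nat_gt (1/(dmin P ⇑x - c))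
        have hd : 0 < dmin P ⇑x - c := by linarith
        have h1 : (0:ℝ) < (m:ℝ)+1 := by positivity
        have h2 : 1/(dmin P ⇑x - c) < (m:ℝ)+1 := lt_of_lt_of_le hm (by linarith)
        have h3 : 1/((m:ℝ)+1) < dmin P ⇑x - c := by
          rw [div_lt_iff₀ h1]
          have := (div_lt_iff₀ hd).mp h2
          linarith
        linarith [h m]
      · intro h m
        have h1 : (0:ℝ) < 1/((m:ℝ)+1) := by positivity
        linarith
    have := MeasureTheory.tendsto_measure_iInter_atTop
      (fun m => (hmeasset _).nullMeasurableSet) hanti ⟨0, measure_ne_top P _⟩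
    rw [hI] at this
    exact (ENNReal.tendsto_toReal (measure_ne_top P _)).comp this
  have hlt : Tendsto (fun m : ℕ => G (c - 1/((m:ℝ)+1))) atTop (nhds (G c)) := by
    have hmono' : Monotone (fun m : ℕ => {x : FSp | dmin P ⇑x ≤ c - 1/((m:ℝ)+1)}) := by
      intro m m' hmm x hx
      simp only [mem_setOf_eq] at *
      have h1 : (0:ℝ) < (m:ℝ)+1 := by positivity
      have h2 : (m:ℝ)+1 ≤ (m':ℝ)+1 := by exact_mod_cast by omega
      have := one_div_le_one_div_of_le h1 h2
      linarith
    have hU : ⋃ m : ℕ, {x : FSp | dmin P ⇑x ≤ c - 1/((m:ℝ)+1)} = {x : FSp | dmin P ⇑x < c} := by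
      ext x
      simp only [mem_iUnion, mem_setOf_eq]
      constructor
      · rintro ⟨m, hm⟩
        have h1 : (0:ℝ) < 1/((m:ℝ)+1) := by positivity
        linarith
      · intro h
        obtain ⟨m, hm⟩ := exists_nat_gt (1/(c - dmin P ⇑x))
        have hd : 0 < c - dmin P ⇑x := by linarith
        have h1 : (0:ℝ) < (m:ℝ)+1 := by positivity
        have h2 : 1/(c - dmin P ⇑x) < (m:ℝ)+1 := lt_of_lt_of_le hm (by linarith)
        have h3 : 1/((m:ℝ)+1) < c - dmin P ⇑x := by
          rw [div_lt_iff₀ h1]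
          have := (div_lt_iff₀ hd).mp h2
          linarith
        exact ⟨m, by linarith⟩
    have htd := MeasureTheory.tendsto_measure_iUnion_atTop (μ := P) hmono'
    rw [hU] at htd
    have hss : {x : FSp | dmin P ⇑x < c} ⊆ {x : FSp | dmin P ⇑x ≤ c} := by
      intro x hx
      simp only [mem_setOf_eq] at *
      exact le_of_lt hx
    have hPeq : P {x : FSp | dmin P ⇑x < c} = P {x : FSp | dmin P ⇑x ≤ c} := by
      apply le_antisymm (measure_mono hss)
      have hsub : {x : FSp | dmin P ⇑x ≤ c}
          ⊆ {x : FSp | dmin P ⇑x < c} ∪ {x : FSp | dmin P ⇑x = c} := by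
        intro x hx
        simp only [mem_setOf_eq] at hx
        rcases lt_or_eq_of_le hx with h | h
        · exact Or.inl h
        · exact Or.inr h
      calc P {x : FSp | dmin P ⇑x ≤ c}
          ≤ P ({x : FSp | dmin P ⇑x < c} ∪ {x : FSp | dmin P ⇑x = c}) := measure_mono hsub
        _ ≤ P {x : FSp | dmin P ⇑x < c} + P {x : FSp | dmin P ⇑x = c} := measure_union_le _ _
        _ = P {x : FSp | dmin P ⇑x < c} := by rw [hnoatom c, add_zero]
    rw [hPeq] at htd
    exact (ENNReal.tendsto_toReal (measure_ne_top P _)).comp htd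
  obtain ⟨N₁, hN₁⟩ := (Metric.tendsto_atTop.mp hrt) (θ/2) (by linarith)
  obtain ⟨N₂, hN₂⟩ := (Metric.tendsto_atTop.mp hlt) (θ/2) (by linarith)
  set m := max N₁ N₂ with hm
  refine ⟨1/((m:ℝ)+1), by positivity, ?_⟩
  intro y hy
  rw [Real.dist_eq] at hy ⊢
  have hd1 := hN₁ m (le_max_left _ _)
  have hd2 := hN₂ m (le_max_right _ _)
  rw [Real.dist_eq] at hd1 hd2
  have hy' := abs_lt.mp hy
  rcases le_or_gt c y with hcy | hcy
  · have k1 : G y ≤ G (c + 1/((m:ℝ)+1)) := hmono (by linarith [hy'.2])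
    have k2 : G c ≤ G y := hmono hcy
    have := abs_lt.mp hd1
    rw [abs_lt]
    constructor <;> linarith
  · have k1 : G (c - 1/((m:ℝ)+1)) ≤ G y := hmono (by linarith [hy'.1])
    have k2 : G y ≤ G c := hmono (le_of_lt hcy)
    have := abs_lt.mp hd2
    rw [abs_lt]
    constructor <;> linarith
-- chunk6
lemma complGT (P : Measure FSp) [IsProbabilityMeasure P] (t : unitInterval) (u : ℝ) :
    (P {x : FSp | u < x t}).toReal = 1 - margF P t u := by
  have hc : {x : FSp | u < x t} = {x : FSp | x t ≤ u}ᶜ := by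
    ext x; simp [not_le]
  rw [hc, measure_compl (measSet_le t u) (measure_ne_top P _), measure_univ,
    ENNReal.toReal_sub_of_le prob_le_one ENNReal.one_ne_top, ENNReal.toReal_one]
  rfl

lemma tcGT_of_equi (P : Measure FSp) [IsProbabilityMeasure P]
    (hequi : ∀ u₀ : ℝ, ∃ ε > (0:ℝ), ∀ η > (0:ℝ), ∃ δ > (0:ℝ),
      ∀ (t s : unitInterval) (u : ℝ), dist t s ≤ δ → |u - u₀| < ε →
        |margF P t u - margF P s u| ≤ η) :
    ∀ (u τ : ℝ), 0 < τ → ∃ δ > (0:ℝ), ∀ t s : unitInterval, dist t s ≤ δ →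
        |(P {x : FSp | u < x t}).toReal - (P {x : FSp | u < x s}).toReal| ≤ τ := by
  intro u τ hτ
  obtain ⟨ε₀, hε₀, hmod⟩ := hequi u
  obtain ⟨δ, hδ0, hδ⟩ := hmod τ hτ
  refine ⟨δ, hδ0, fun t s hts => ?_⟩
  rw [complGT P t u, complGT P s u]
  have h := hδ t s u hts (by simpa using hε₀)
  have he : 1 - margF P t u - (1 - margF P s u) = -(margF P t u - margF P s u) := by ring
  rw [he, abs_neg]
  exact h

lemma tcLT_of_equi (P : Measure FSp) [IsProbabilityMeasure P]
    (hequi : ∀ u₀ : ℝ, ∃ ε > (0:ℝ), ∀ η > (0:ℝ), ∃ δ > (0:ℝ),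
      ∀ (t s : unitInterval) (u : ℝ), dist t s ≤ δ → |u - u₀| < ε →
        |margF P t u - margF P s u| ≤ η) :
    ∀ (u τ : ℝ), 0 < τ → ∃ δ > (0:ℝ), ∀ t s : unitInterval, dist t s ≤ δ →
        |(P {x : FSp | x t < u}).toReal - (P {x : FSp | x s < u}).toReal| ≤ τ := by
  intro u τ hτ
  obtain ⟨ε₀, hε₀, hmod⟩ := hequi u
  obtain ⟨δ, hδ0, hδ⟩ := hmod τ hτ
  refine ⟨δ, hδ0, fun t s hts => ?_⟩
  have hlim : ∀ r : unitInterval, Tendsto (fun m : ℕ => margF P r (u - ε₀/(2*((m:ℝ)+1))))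
      atTop (nhds ((P {x : FSp | x r < u}).toReal)) := by
    intro r
    have hmono : Monotone (fun m : ℕ => {x : FSp | x r ≤ u - ε₀/(2*((m:ℝ)+1))}) := by
      intro m m' hmm x hx
      simp only [mem_setOf_eq] at *
      have h1 : (0:ℝ) < 2*((m:ℝ)+1) := by positivity
      have h2 : 2*((m:ℝ)+1) ≤ 2*((m':ℝ)+1) := by
        have : (m:ℝ) ≤ (m':ℝ) := by exact_mod_cast hmm
        linarith
      have h3 : ε₀/(2*((m':ℝ)+1)) ≤ ε₀/(2*((m:ℝ)+1)) := by gcongr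
      linarith
    have hUn : ⋃ m : ℕ, {x : FSp | x r ≤ u - ε₀/(2*((m:ℝ)+1))} = {x : FSp | x r < u} := by
      ext x
      simp only [mem_iUnion, mem_setOf_eq]
      constructor
      · rintro ⟨m, hm⟩
        have : 0 < ε₀/(2*((m:ℝ)+1)) := by positivity
        linarith
      · intro h
        obtain ⟨m, hm⟩ := exists_nat_gt (ε₀/(2*(u - x r)))
        have hd : 0 < u - x r := by linarith
        have h1 : (0:ℝ) < (m:ℝ)+1 := by positivity
        have h2 : ε₀/(2*(u - x r)) < (m:ℝ)+1 := lt_of_lt_of_le hm (by linarith)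
        have h3 : ε₀/(2*((m:ℝ)+1)) < u - x r := by
          rw [div_lt_iff₀ (by positivity : (0:ℝ) < 2*((m:ℝ)+1))]
          have h4 := (div_lt_iff₀ (by positivity : (0:ℝ) < 2*(u - x r))).mp h2
          have h5 : ((m:ℝ)+1) * (2*(u - x r)) = (u - x r) * (2*((m:ℝ)+1)) := by ring
          linarith
        exact ⟨m, by linarith⟩
    have htd := MeasureTheory.tendsto_measure_iUnion_atTop (μ := P) hmono
    rw [hUn] at htd
    exact (ENNReal.tendsto_toReal (measure_ne_top P _)).comp htd
  have hbnd : ∀ m : ℕ,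
      |margF P t (u - ε₀/(2*((m:ℝ)+1))) - margF P s (u - ε₀/(2*((m:ℝ)+1)))| ≤ τ := by
    intro m
    apply hδ t s _ hts
    have h1 : 0 < ε₀/(2*((m:ℝ)+1)) := by positivity
    have h2 : ε₀/(2*((m:ℝ)+1)) ≤ ε₀/2 := by
      have h3 : (2:ℝ) ≤ 2*((m:ℝ)+1) := by
        have : (0:ℝ) ≤ (m:ℝ) := Nat.cast_nonneg m
        linarith
      gcongr
    have he : u - ε₀/(2*((m:ℝ)+1)) - u = -(ε₀/(2*((m:ℝ)+1))) := by ring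
    rw [he, abs_neg, abs_of_pos h1]
    linarith
  have hlim2 := ((hlim t).sub (hlim s)).abs
  exact le_of_tendsto hlim2 (Filter.Eventually.of_forall hbnd)

lemma noatom_dmin (P : Measure FSp) [IsProbabilityMeasure P]
    {Ω' : Type} [MeasurableSpace Ω'] (ℙ' : Measure Ω') [IsProbabilityMeasure ℙ']
    (X : ℕ → Ω' → FSp) (hXmeas : ∀ k, Measurable (X k))
    (hXlaw : ∀ k, ℙ'.map (X k) = P)
    (hXindep : ProbabilityTheory.iIndepFun X ℙ')
    (hne : ∀ᵐ ω ∂ℙ', X 0 ω ≠ X 1 ω)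
    (hdeg1 : (P.prod P) {p : FSp × FSp | dmin P ⇑p.1 = dmin P ⇑p.2 ∧ p.1 ≠ p.2} = 0) :
    ∀ c, P {x : FSp | dmin P ⇑x = c} = 0 := by
  intro c
  set E := {x : FSp | dmin P ⇑x = c} with hE
  have hEm : MeasurableSet E := (meas_dmin P) (measurableSet_singleton c)
  have hpm : Measurable (fun ω => (X 0 ω, X 1 ω)) := (hXmeas 0).prodMk (hXmeas 1)
  have hindep01 : ProbabilityTheory.IndepFun (X 0) (X 1) ℙ' :=
    hXindep.indepFun (by norm_num : (0:ℕ) ≠ 1)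
  have hmap : ℙ'.map (fun ω => (X 0 ω, X 1 ω)) = P.prod P := by
    rw [(ProbabilityTheory.indepFun_iff_map_prod_eq_prod_map_map
      (hXmeas 0).aemeasurable (hXmeas 1).aemeasurable).mp hindep01, hXlaw 0, hXlaw 1]
  set W := toMeasurable (P.prod P) {p : FSp × FSp | dmin P ⇑p.1 = dmin P ⇑p.2 ∧ p.1 ≠ p.2}
    with hW
  have hWm : MeasurableSet W := measurableSet_toMeasurable _ _
  have hW0 : (P.prod P) W = 0 := by
    rw [hW, measure_toMeasurable]; exact hdeg1
  have hEE : ℙ' (X 0 ⁻¹' E ∩ X 1 ⁻¹' E) = P E * P E := by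
    have e0 : ℙ' (X 0 ⁻¹' E) = P E := by rw [← Measure.map_apply (hXmeas 0) hEm, hXlaw 0]
    have e1 : ℙ' (X 1 ⁻¹' E) = P E := by rw [← Measure.map_apply (hXmeas 1) hEm, hXlaw 1]
    rw [hindep01.measure_inter_preimage_eq_mul E E hEm hEm, e0, e1]
  have hsub : X 0 ⁻¹' E ∩ X 1 ⁻¹' E
      ⊆ ((fun ω => (X 0 ω, X 1 ω)) ⁻¹' W) ∪ {ω | X 0 ω = X 1 ω} := by
    rintro ω ⟨h0, h1⟩
    by_cases he : X 0 ω = X 1 ω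
    · exact Or.inr he
    · left
      apply subset_toMeasurable
      have h0' : dmin P ⇑(X 0 ω) = c := h0
      have h1' : dmin P ⇑(X 1 ω) = c := h1
      exact ⟨by rw [h0', h1'], he⟩
  have hz1 : ℙ' ((fun ω => (X 0 ω, X 1 ω)) ⁻¹' W) = 0 := by
    rw [← Measure.map_apply hpm hWm, hmap]; exact hW0
  have hz2 : ℙ' {ω | X 0 ω = X 1 ω} = 0 := by
    rw [ae_iff] at hne
    simpa using hne
  have hz : ℙ' (X 0 ⁻¹' E ∩ X 1 ⁻¹' E) = 0 :=
    measure_mono_null hsub (measure_union_null hz1 hz2)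
  have hPE : P E * P E = 0 := by rw [← hEE]; exact hz
  rcases mul_eq_zero.mp hPE with h | h <;> exact h
-- chunk7: deterministic assembly
lemma det_bound (P : Measure FSp) [IsProbabilityMeasure P]
    (hnoatom : ∀ c, P {x : FSp | dmin P ⇑x = c} = 0)
    (hG0 : (P {x : FSp | dmin P ⇑x ≤ (0:ℝ)}).toReal = 0)
    {θ h η₁ τ' : ℝ}
    (hh : 0 < h) (hh1 : h ≤ 1/8)
    (hUC : ∀ y y' : ℝ, |y - y'| ≤ 2*h →
      |(P {x : FSp | dmin P ⇑x ≤ y}).toReal - (P {x : FSp | dmin P ⇑x ≤ y'}).toReal| ≤ θ)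
    (hη : 0 < η₁) (hηh : 8*η₁ ≤ h)
    (K : ℕ) (hK : 2 ≤ (K:ℝ)*h)
    (Q : Measure FSp) [IsProbabilityMeasure Q]
    (hdm : ∀ g : unitInterval → ℝ, |dmin Q g - dmin P g| ≤ 2*η₁)
    (hB : ∀ i ≤ K, |(Q {x : FSp | dmin P ⇑x ≤ (i:ℝ)*h}).toReal
      - (P {x : FSp | dmin P ⇑x ≤ (i:ℝ)*h}).toReal| ≤ τ')
    (f : FSp) :
    |ed Q ⇑f - ed P ⇑f| ≤ θ + τ' := by
  set G : ℝ → ℝ := fun y => (P {x : FSp | dmin P ⇑x ≤ y}).toReal with hGdef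
  set c := dmin P ⇑f with hc
  have hc0 : 0 ≤ c := dmin_nonneg P ⇑f
  have hc1 : c ≤ 1 := dmin_le_one P ⇑f
  have hedP : ed P ⇑f = G c := ed_eq_G P hnoatom f
  have hτ'0 : 0 ≤ τ' := le_trans (abs_nonneg _) (hB 0 (Nat.zero_le K))
  -- upper bound
  have hup : ed Q ⇑f ≤ G c + (θ + τ') := by
    set j := Nat.ceil ((c + 4*η₁)/h) with hj
    have hjK : j ≤ K := by
      rw [hj]
      apply Nat.ceil_le.mpr
      rw [div_le_iff₀ hh]
      linarith
    have hle := Nat.le_ceil ((c + 4*η₁)/h)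
    have hcj1 : c + 4*η₁ ≤ (j:ℝ)*h := by
      have h2 := mul_le_mul_of_nonneg_right hle hh.le
      rw [div_mul_cancel₀ _ (ne_of_gt hh)] at h2
      exact h2
    have hcj2 : (j:ℝ)*h ≤ c + 4*η₁ + h := by
      have h1 : (j:ℝ) < (c + 4*η₁)/h + 1 := Nat.ceil_lt_add_one (by positivity)
      have h2 := mul_le_mul_of_nonneg_right (le_of_lt h1) hh.le
      rw [add_mul, div_mul_cancel₀ _ (ne_of_gt hh), one_mul] at h2
      linarith
    have hsub : {x : FSp | ¬ prec Q ⇑f ⇑x} ⊆ {x : FSp | dmin P ⇑x ≤ (j:ℝ)*h} := by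
      intro x hx
      have h1 : dmin Q ⇑x ≤ dmin Q ⇑f := notprec_subset_le Q f hx
      have h2 := abs_le.mp (hdm ⇑x)
      have h3 := abs_le.mp (hdm ⇑f)
      show dmin P ⇑x ≤ (j:ℝ)*h
      linarith
    have hQle : ed Q ⇑f ≤ (Q {x : FSp | dmin P ⇑x ≤ (j:ℝ)*h}).toReal :=
      ENNReal.toReal_mono (measure_ne_top Q _) (measure_mono hsub)
    have hBj := abs_le.mp (hB j hjK)
    have hUCj := abs_le.mp (hUC ((j:ℝ)*h) c (by
      rw [abs_le]; constructor <;> linarith))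
    have hGj : (Q {x : FSp | dmin P ⇑x ≤ (j:ℝ)*h}).toReal ≤ G ((j:ℝ)*h) + τ' := by
      have := hBj.2
      simp only [hGdef]
      linarith
    calc ed Q ⇑f ≤ (Q {x : FSp | dmin P ⇑x ≤ (j:ℝ)*h}).toReal := hQle
      _ ≤ G ((j:ℝ)*h) + τ' := hGj
      _ ≤ G c + (θ + τ') := by linarith [hUCj.2]
  -- lower bound
  have hlow : G c - (θ + τ') ≤ ed Q ⇑f := by
    have hed0 : (0:ℝ) ≤ ed Q ⇑f := ENNReal.toReal_nonneg
    rcases lt_or_ge c (5*η₁ + h) with hsmall | hbig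
    · have hUCc := abs_le.mp (hUC c 0 (by
        rw [abs_le]; constructor <;> [linarith; skip]
        simp only [sub_zero]; linarith))
      have : G c ≤ θ := by
        have h5 := hUCc.2
        simp only [hGdef]
        rw [hG0] at h5
        linarith
      linarith
    · set j := Nat.floor ((c - 5*η₁)/h) with hj
      have hnn : (0:ℝ) ≤ (c - 5*η₁)/h := by
        apply div_nonneg _ hh.le
        linarith
      have hfl := Nat.floor_le hnn
      have hjh1 : (j:ℝ)*h ≤ c - 5*η₁ := by
        have h2 := mul_le_mul_of_nonneg_right hfl hh.le
        rw [div_mul_cancel₀ _ (ne_of_gt hh)] at h2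
        exact h2
      have hjh2 : c - 5*η₁ - h ≤ (j:ℝ)*h := by
        have h1 : (c - 5*η₁)/h < (j:ℝ) + 1 := Nat.lt_floor_add_one _
        have h2 := mul_le_mul_of_nonneg_right (le_of_lt h1) hh.le
        rw [add_mul, div_mul_cancel₀ _ (ne_of_gt hh), one_mul] at h2
        linarith
      have hjK : j ≤ K := by
        have h1 : (j:ℝ)*h ≤ (K:ℝ)*h := by linarith
        have h2 : (j:ℝ) ≤ (K:ℝ) := le_of_mul_le_mul_right h1 hh
        exact_mod_cast h2
      have hsub : {x : FSp | dmin P ⇑x ≤ (j:ℝ)*h} ⊆ {x : FSp | ¬ prec Q ⇑f ⇑x} := by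
        intro x hx
        apply lt_subset_notprec Q f
        show dmin Q ⇑x < dmin Q ⇑f
        have h2 := abs_le.mp (hdm ⇑x)
        have h3 := abs_le.mp (hdm ⇑f)
        have hx' : dmin P ⇑x ≤ (j:ℝ)*h := hx
        linarith
      have hQge : (Q {x : FSp | dmin P ⇑x ≤ (j:ℝ)*h}).toReal ≤ ed Q ⇑f :=
        ENNReal.toReal_mono (measure_ne_top Q _) (measure_mono hsub)
      have hBj := abs_le.mp (hB j hjK)
      have hUCj := abs_le.mp (hUC ((j:ℝ)*h) c (by
        rw [abs_le]; constructor <;> linarith))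
      have hGj : G ((j:ℝ)*h) - τ' ≤ (Q {x : FSp | dmin P ⇑x ≤ (j:ℝ)*h}).toReal := by
        have := hBj.1
        simp only [hGdef]
        linarith
      have : G c - θ ≤ G ((j:ℝ)*h) := by linarith [hUCj.1]
      linarith
  rw [hedP, abs_le]
  constructor <;> linarith
-- chunk8: convexity + main theorem
lemma convex_gtSet (t : unitInterval) (u : ℝ) : Convex ℝ {x : FSp | u < x t} := by
  intro x hx y hy a b ha hb hab
  simp only [mem_setOf_eq] at *
  have hev : (a • x + b • y) t = a * x t + b * y t := by
    simp [ContinuousMap.add_apply, ContinuousMap.smul_apply, smul_eq_mul]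
  show u < (a • x + b • y) t
  rw [hev]
  rcases lt_or_eq_of_le ha with ha0 | ha0
  · have h1 : a*u < a*(x t) := mul_lt_mul_of_pos_left hx ha0
    have h2 : b*u ≤ b*(y t) := mul_le_mul_of_nonneg_left (le_of_lt hy) hb
    have h3 : a*u + b*u = u := by rw [← add_mul, hab, one_mul]
    linarith
  · have hb1 : b = 1 := by rw [← ha0] at hab; linarith
    rw [← ha0, hb1]
    simpa using hy

lemma convex_ltSet (t : unitInterval) (u : ℝ) : Convex ℝ {x : FSp | x t < u} := by
  intro x hx y hy a b ha hb hab
  simp only [mem_setOf_eq] at *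
  have hev : (a • x + b • y) t = a * x t + b * y t := by
    simp [ContinuousMap.add_apply, ContinuousMap.smul_apply, smul_eq_mul]
  show (a • x + b • y) t < u
  rw [hev]
  rcases lt_or_eq_of_le ha with ha0 | ha0
  · have h1 : a*(x t) < a*u := mul_lt_mul_of_pos_left hx ha0
    have h2 : b*(y t) ≤ b*u := mul_le_mul_of_nonneg_left (le_of_lt hy) hb
    have h3 : a*u + b*u = u := by rw [← add_mul, hab, one_mul]
    linarith
  · have hb1 : b = 1 := by rw [← ha0] at hab; linarith
    rw [← ha0, hb1]
    simpa using hy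

/-- **Proposition 2 (uniform convergence of sample extremal depth).**
Under non-degeneracy, crossing, equicontinuity and Glivenko–Cantelli-type
conditions, `sup_f |ED(f, P_n) - ED(f, P)| → 0` in outer probability. -/
theorem sample_ED_uniform_convergence
    (P : Measure FSp) [IsProbabilityMeasure P]
    {Ω' : Type} [MeasurableSpace Ω'] (ℙ : Measure Ω') [IsProbabilityMeasure ℙ]
    (X : ℕ → Ω' → FSp) (hXmeas : ∀ k, Measurable (X k))
    (hXlaw : ∀ k, ℙ.map (X k) = P)
    (hXindep : ProbabilityTheory.iIndepFun X ℙ)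
    (Pn : ℕ → Ω' → Measure FSp)
    (hPn : ∀ n ω, Pn n ω =
      (n : ℝ≥0∞)⁻¹ • ∑ k ∈ Finset.range n, Measure.dirac (X k ω))
    (Cn : ℕ → Ω' → ℕ∞)
    (hCn : ∀ n ω, Cn n ω =
      {t : unitInterval | ∃ i j, i < j ∧ j < n ∧ X i ω t = X j ω t}.encard)
    (hCnfin : ∀ n, ∀ᵐ ω ∂ℙ, Cn n ω ≠ ⊤)
    (hcross : ∀ ε > (0:ℝ), Tendsto
      (fun n : ℕ => ℙ {ω | ENNReal.ofReal (Real.exp (ε * n)) ≤ (Cn n ω : ℝ≥0∞)})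
      atTop (nhds 0))
    (hdeg0 : P {x : FSp | dmin P ⇑x = 0} = 0)
    (hdeg1 : (P.prod P) {p : FSp × FSp | dmin P ⇑p.1 = dmin P ⇑p.2 ∧ p.1 ≠ p.2} = 0)
    (hequi : ∀ u₀ : ℝ, ∃ ε > (0:ℝ), ∀ η > (0:ℝ), ∃ δ > (0:ℝ),
      ∀ (t s : unitInterval) (u : ℝ), dist t s ≤ δ → |u - u₀| < ε →
        |margF P t u - margF P s u| ≤ η)
    (hGC : ∀ᵐ ω ∂ℙ, ∀ η > (0:ℝ), ∃ N : ℕ, ∀ n ≥ N, ∀ A : Set FSp,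
      Convex ℝ A → MeasurableSet A →
        |(Pn n ω A).toReal - (P A).toReal| ≤ η) :
    ∀ ε > (0:ℝ), Tendsto
      (fun n : ℕ => ℙ {ω | ∃ f : FSp, ε < |ed (Pn n ω) ⇑f - ed P ⇑f|})
      atTop (nhds 0) := by
  intro ε hε
  haveI : Infinite unitInterval := Set.Icc.infinite (by norm_num)
  -- no two sample paths coincide
  have hne01 : ∀ᵐ ω ∂ℙ, X 0 ω ≠ X 1 ω := by
    filter_upwards [hCnfin 2] with ω hω
    intro he
    apply hω
    rw [hCn 2 ω]
    have huniv : {t : unitInterval | ∃ i j, i < j ∧ j < 2 ∧ X i ω t = X j ω t} = Set.univ := by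
      apply eq_univ_of_forall
      intro t
      exact ⟨0, 1, Nat.zero_lt_one, Nat.one_lt_two, by rw [he]⟩
    rw [huniv]
    exact Set.encard_eq_top Set.infinite_univ
  have hnoatom : ∀ c, P {x : FSp | dmin P ⇑x = c} = 0 :=
    noatom_dmin P ℙ X hXmeas hXlaw hXindep hne01 hdeg1
  have hGcont : Continuous (fun c : ℝ => (P {x : FSp | dmin P ⇑x ≤ c}).toReal) :=
    G_continuous P hnoatom
  have hGmono : Monotone (fun c : ℝ => (P {x : FSp | dmin P ⇑x ≤ c}).toReal) :=
    fun a b hab => ENNReal.toReal_mono (measure_ne_top P _)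
      (measure_mono (fun x hx => le_trans hx hab))
  have hGlow : ∀ y : ℝ, y < 0 → (P {x : FSp | dmin P ⇑x ≤ y}).toReal = 0 := by
    intro y hy
    have he : {x : FSp | dmin P ⇑x ≤ y} = ∅ := by
      apply eq_empty_iff_forall_notMem.mpr
      intro x hx
      have h1 : dmin P ⇑x ≤ y := hx
      linarith [dmin_nonneg P ⇑x]
    rw [he]
    simp
  have hGhigh : ∀ y : ℝ, 1 ≤ y → (P {x : FSp | dmin P ⇑x ≤ y}).toReal = 1 := by
    intro y hy
    have he : {x : FSp | dmin P ⇑x ≤ y} = Set.univ :=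
      eq_univ_of_forall (fun x => le_trans (dmin_le_one P ⇑x) hy)
    rw [he, measure_univ]
    simp
  have hG0 : (P {x : FSp | dmin P ⇑x ≤ (0:ℝ)}).toReal = 0 := by
    have hs : {x : FSp | dmin P ⇑x ≤ (0:ℝ)} = {x : FSp | dmin P ⇑x = 0} := by
      ext x
      simp only [mem_setOf_eq]
      exact ⟨fun h => le_antisymm h (dmin_nonneg P ⇑x), fun h => le_of_eq h⟩
    rw [hs, hdeg0]
    simp
  set θ := ε/4 with hθdef
  have hθpos : 0 < θ := by rw [hθdef]; linarith
  -- uniform continuity modulus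
  have hUCc : ∃ δ > (0:ℝ), δ ≤ 1 ∧ ∀ y y' : ℝ, |y - y'| ≤ δ →
      |(P {x : FSp | dmin P ⇑x ≤ y}).toReal - (P {x : FSp | dmin P ⇑x ≤ y'}).toReal| ≤ θ := by
    have hcpt := (isCompact_Icc (a := (-2:ℝ)) (b := 2)).uniformContinuousOn_of_continuous
      hGcont.continuousOn
    obtain ⟨δ, hδ0, hδ⟩ := (Metric.uniformContinuousOn_iff_le).mp hcpt θ hθpos
    refine ⟨min δ 1, lt_min hδ0 one_pos, min_le_right _ _, ?_⟩
    intro y y' hyy'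
    have hyy1 : |y - y'| ≤ 1 := le_trans hyy' (min_le_right _ _)
    have hyy2 := abs_le.mp hyy1
    rcases le_or_gt y (-2) with hc1 | hc1
    · rw [hGlow y (by linarith), hGlow y' (by linarith)]
      simpa using hθpos.le
    · rcases le_or_gt 2 y with hc2 | hc2
      · rw [hGhigh y (by linarith), hGhigh y' (by linarith)]
        simpa using hθpos.le
      · rcases le_or_gt y' (-2) with hd1 | hd1
        · rw [hGlow y (by linarith), hGlow y' (by linarith)]
          simpa using hθpos.le
        · rcases le_or_gt 2 y' with hd2 | hd2
          · rw [hGhigh y (by linarith), hGhigh y' (by linarith)]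
            simpa using hθpos.le
          · have := hδ y ⟨by linarith, by linarith⟩ y' ⟨by linarith, by linarith⟩
              (by rw [Real.dist_eq]; exact le_trans hyy' (min_le_left _ _))
            rwa [Real.dist_eq] at this
  obtain ⟨δ₀, hδ₀, hδ₀1, hUC⟩ := hUCc
  set h := min (δ₀/2) (1/8) with hhdef
  have hh : 0 < h := lt_min (by linarith) (by norm_num)
  have hh1 : h ≤ 1/8 := min_le_right _ _
  have hUC2 : ∀ y y' : ℝ, |y - y'| ≤ 2*h →
      |(P {x : FSp | dmin P ⇑x ≤ y}).toReal - (P {x : FSp | dmin P ⇑x ≤ y'}).toReal| ≤ θ := by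
    intro y y' hyy'
    apply hUC y y'
    have : 2*h ≤ δ₀ := by
      have := min_le_left (δ₀/2) (1/8)
      have h2 : h ≤ δ₀/2 := this
      linarith
    linarith
  set η₁ := h/8 with hη₁def
  have hη : 0 < η₁ := by rw [hη₁def]; positivity
  have hηh : 8*η₁ ≤ h := by rw [hη₁def]; linarith
  set τ' := ε/4 with hτ'def
  have hτ'pos : 0 < τ' := by rw [hτ'def]; linarith
  set K := Nat.ceil (2/h) with hKdef
  have hK : 2 ≤ (K:ℝ)*h := by
    have hle := Nat.le_ceil (2/h)
    have h2 := mul_le_mul_of_nonneg_right hle hh.le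
    rw [div_mul_cancel₀ _ (ne_of_gt hh)] at h2
    exact h2
  -- countable family of test sets
  set ds := TopologicalSpace.denseSeq unitInterval with hds
  set Hgt : ℕ → ℚ → Set FSp := fun i q => {x : FSp | (q:ℝ) < x (ds i)} with hHgt
  set Hlt : ℕ → ℚ → Set FSp := fun i q => {x : FSp | x (ds i) < (q:ℝ)} with hHlt
  set Sg : ℕ → Set FSp := fun i => {x : FSp | dmin P ⇑x ≤ (i:ℝ)*h} with hSg
  have hHgtm : ∀ i q, MeasurableSet (Hgt i q) := fun i q => measSet_gt _ _
  have hHltm : ∀ i q, MeasurableSet (Hlt i q) := fun i q => measSet_lt _ _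
  have hSgm : ∀ i, MeasurableSet (Sg i) := fun i => (meas_dmin P) measurableSet_Iic
  -- good events
  set Mev : ℕ → Set Ω' := fun n => {ω | ∀ i : ℕ, ∀ q : ℚ,
    |(Pn n ω (Hgt i q)).toReal - (P (Hgt i q)).toReal| ≤ η₁ ∧
    |(Pn n ω (Hlt i q)).toReal - (P (Hlt i q)).toReal| ≤ η₁} with hMev
  set Bev : ℕ → Set Ω' := fun n => {ω | ∀ i ≤ K,
    |(Pn n ω (Sg i)).toReal - (P (Sg i)).toReal| ≤ τ'} with hBev
  have hPnm : ∀ n (S : Set FSp), MeasurableSet S →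
      Measurable (fun ω : Ω' => (Pn n ω S).toReal) := by
    intro n S hS
    have heq : (fun ω : Ω' => (Pn n ω S).toReal) = fun ω =>
        ((((n : ℝ≥0∞)⁻¹ • ∑ k ∈ Finset.range n, Measure.dirac (X k ω)) : Measure FSp) S).toReal := by
      funext ω; rw [hPn]
    rw [heq]
    exact meas_Pn_apply X hXmeas n hS
  have hMevm : ∀ n, MeasurableSet (Mev n) := by
    intro n
    have he : Mev n = ⋂ (i : ℕ), ⋂ (q : ℚ),
        ({ω | |(Pn n ω (Hgt i q)).toReal - (P (Hgt i q)).toReal| ≤ η₁} ∩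
         {ω | |(Pn n ω (Hlt i q)).toReal - (P (Hlt i q)).toReal| ≤ η₁}) := by
      ext ω
      simp only [hMev, mem_setOf_eq, mem_iInter, mem_inter_iff]
    rw [he]
    refine MeasurableSet.iInter fun i => MeasurableSet.iInter fun q =>
      MeasurableSet.inter ?_ ?_
    · exact measurableSet_le (((hPnm n _ (hHgtm i q)).sub measurable_const).abs)
        measurable_const
    · exact measurableSet_le (((hPnm n _ (hHltm i q)).sub measurable_const).abs)
        measurable_const
  have hBevm : ∀ n, MeasurableSet (Bev n) := by
    intro n
    have he : Bev n = ⋂ (i : ℕ), ⋂ (_ : i ≤ K),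
        {ω | |(Pn n ω (Sg i)).toReal - (P (Sg i)).toReal| ≤ τ'} := by
      ext ω
      simp only [hBev, mem_setOf_eq, mem_iInter]
    rw [he]
    exact MeasurableSet.iInter fun i => MeasurableSet.iInter fun _ =>
      measurableSet_le (((hPnm n _ (hSgm i)).sub measurable_const).abs) measurable_const
  -- a.e. eventual membership in Mev
  have hMae : ∀ᵐ ω ∂ℙ, ∃ N, ∀ n ≥ N, ω ∈ Mev n := by
    filter_upwards [hGC] with ω hω
    obtain ⟨N, hN⟩ := hω η₁ hη
    refine ⟨N, fun n hn => ?_⟩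
    intro i q
    exact ⟨hN n hn (Hgt i q) (convex_gtSet _ _) (hHgtm i q),
      hN n hn (Hlt i q) (convex_ltSet _ _) (hHltm i q)⟩
  -- a.e. eventual membership in Bev (strong law)
  have hBae : ∀ᵐ ω ∂ℙ, ∃ N, ∀ n ≥ N, ω ∈ Bev n := by
    have h1 : ∀ i : ℕ, ∀ᵐ ω ∂ℙ, Tendsto
        (fun n : ℕ => (n:ℝ)⁻¹ * ∑ k ∈ Finset.range n, (Sg i).indicator (fun _ => (1:ℝ)) (X k ω))
        atTop (nhds (P (Sg i)).toReal) :=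
      fun i => empirical_ae P ℙ X hXmeas hXlaw hXindep (hSgm i)
    have h2 := ae_all_iff.mpr h1
    filter_upwards [h2] with ω hω
    have h3 : ∀ᶠ n : ℕ in atTop, ∀ i ∈ Finset.range (K+1),
        |(n:ℝ)⁻¹ * (∑ k ∈ Finset.range n, (Sg i).indicator (fun _ => (1:ℝ)) (X k ω))
          - (P (Sg i)).toReal| ≤ τ' := by
      rw [Filter.eventually_all_finset]
      intro i _
      obtain ⟨N, hN⟩ := Metric.tendsto_atTop.mp (hω i) τ' hτ'pos
      rw [eventually_atTop]
      refine ⟨N, fun n hn => ?_⟩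
      have := hN n hn
      rw [Real.dist_eq] at this
      exact le_of_lt this
    rw [eventually_atTop] at h3
    obtain ⟨N, hN⟩ := h3
    refine ⟨N, fun n hn => ?_⟩
    intro i hiK
    have hmem : i ∈ Finset.range (K+1) := Finset.mem_range.mpr (by omega)
    have := hN n hn i hmem
    have hform : (Pn n ω (Sg i)).toReal
        = (n:ℝ)⁻¹ * ∑ k ∈ Finset.range n, (Sg i).indicator (fun _ => (1:ℝ)) (X k ω) := by
      rw [hPn]
      exact Pn_apply_toReal X n ω (hSgm i)
    rw [hform]
    exact this
  -- decreasing bad events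
  set Dn : ℕ → Set Ω' := fun n => ⋃ k, ⋃ (_ : n ≤ k), ((Mev k ∩ Bev k)ᶜ) with hDn
  have hDnm : ∀ n, MeasurableSet (Dn n) := fun n =>
    MeasurableSet.iUnion fun k => MeasurableSet.iUnion fun _ =>
      ((hMevm k).inter (hBevm k)).compl
  have hDanti : Antitone Dn := by
    intro n n' hnn' ω hω
    simp only [hDn, mem_iUnion] at hω ⊢
    obtain ⟨k, hk, hc⟩ := hω
    exact ⟨k, le_trans hnn' hk, hc⟩
  have hDlim := MeasureTheory.tendsto_measure_iInter_atTop
    (fun n => (hDnm n).nullMeasurableSet) hDanti ⟨0, measure_ne_top ℙ _⟩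
  have hIz : ℙ (⋂ n, Dn n) = 0 := by
    have hae := hMae.and hBae
    rw [ae_iff] at hae
    apply measure_mono_null _ hae
    intro ω hω
    simp only [mem_setOf_eq]
    rintro ⟨⟨N₁, h₁⟩, ⟨N₂, h₂⟩⟩
    have hm : ω ∈ Dn (max N₁ N₂) := mem_iInter.mp hω (max N₁ N₂)
    simp only [hDn, mem_iUnion] at hm
    obtain ⟨k, hk, hc⟩ := hm
    exact hc ⟨h₁ k (le_trans (le_max_left _ _) hk), h₂ k (le_trans (le_max_right _ _) hk)⟩
  rw [hIz] at hDlim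
  -- containment of the bad event for n ≥ 1
  have hsubS : ∀ n, 1 ≤ n →
      {ω | ∃ f : FSp, ε < |ed (Pn n ω) ⇑f - ed P ⇑f|} ⊆ Dn n := by
    intro n hn ω hω
    by_contra hωD
    have hgood : ω ∈ Mev n ∩ Bev n := by
      by_contra hbad
      exact hωD (mem_iUnion.mpr ⟨n, mem_iUnion.mpr ⟨le_refl n, hbad⟩⟩)
    obtain ⟨f, hf⟩ := hω
    haveI hQP : IsProbabilityMeasure (Pn n ω) := by
      rw [hPn]
      exact Pn_isProb X hn ω
    -- halfspace bounds at every (t,u)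
    have hMfacts : ∀ (i : ℕ) (q : ℚ),
        |((((n : ℝ≥0∞)⁻¹ • ∑ k ∈ Finset.range n, Measure.dirac (X k ω)) : Measure FSp)
            {x : FSp | (q:ℝ) < x (TopologicalSpace.denseSeq unitInterval i)}).toReal
          - (P {x : FSp | (q:ℝ) < x (TopologicalSpace.denseSeq unitInterval i)}).toReal| ≤ η₁ ∧
        |((((n : ℝ≥0∞)⁻¹ • ∑ k ∈ Finset.range n, Measure.dirac (X k ω)) : Measure FSp)
            {x : FSp | x (TopologicalSpace.denseSeq unitInterval i) < (q:ℝ)}).toReal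
          - (P {x : FSp | x (TopologicalSpace.denseSeq unitInterval i) < (q:ℝ)}).toReal| ≤ η₁ := by
      intro i q
      have hgm := hgood.1 i q
      rw [hPn n ω] at hgm
      exact hgm
    have htrans := halfspace_transfer P n (fun k => X k ω) η₁
      (tcGT_of_equi P hequi) (tcLT_of_equi P hequi) hMfacts
    have hb : ∀ (t : unitInterval) (u : ℝ),
        |((Pn n ω) {x : FSp | u < x t}).toReal - (P {x : FSp | u < x t}).toReal| ≤ η₁ ∧
        |((Pn n ω) {x : FSp | x t < u}).toReal - (P {x : FSp | x t < u}).toReal| ≤ η₁ := by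
      intro t u
      constructor
      · rw [hPn n ω]; exact (htrans t u).1
      · rw [hPn n ω]; exact (htrans t u).2
    have hpd := pdepth_close P (Pn n ω) hb
    have hpd' : ∀ (g : unitInterval → ℝ) (t : unitInterval),
        |pdepth P g t - pdepth (Pn n ω) g t| ≤ 2*η₁ := by
      intro g t
      rw [abs_sub_comm]
      exact hpd g t
    have hdm : ∀ g : unitInterval → ℝ, |dmin (Pn n ω) g - dmin P g| ≤ 2*η₁ := by
      intro g
      rw [abs_le]
      constructor
      · have := dmin_bracket_one P (Pn n ω) hη.le (dcdf_bracket P (Pn n ω) hpd) g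
        linarith
      · have := dmin_bracket_one (Pn n ω) P hη.le (dcdf_bracket (Pn n ω) P hpd') g
        linarith
    have hBb : ∀ i ≤ K, |((Pn n ω) (Sg i)).toReal - (P (Sg i)).toReal| ≤ τ' := hgood.2
    have hdb := det_bound P hnoatom hG0 hh hh1 hUC2 hη hηh K hK (Pn n ω) hdm hBb f
    rw [hθdef, hτ'def] at hdb
    linarith
  -- squeeze
  have hub : ∀ᶠ n in atTop,
      ℙ {ω | ∃ f : FSp, ε < |ed (Pn n ω) ⇑f - ed P ⇑f|} ≤ ℙ (Dn n) := by
    rw [eventually_atTop]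
    exact ⟨1, fun n hn => measure_mono (hsubS n hn)⟩
  exact tendsto_of_tendsto_of_tendsto_of_le_of_le' tendsto_const_nhds hDlim
    (Filter.Eventually.of_forall (fun n => zero_le)) hub
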